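/- arXiv:2312.00676 — 4 statements merged into one kernel-verified Lean document; each statement's English description precedes it below -/
import Mathlib

section
/- Let F be a field and P ∈ F[λ]^{m×n} a polynomial matrix with normal rank r, 0 < r ≤ min{m,n}. Suppose M ∈ F[λ]^{(m−r)×m} is a matrix whose rows form a minimal basis of N_ℓ(P), L ∈ F[λ]^{m×r} is a matrix whose columns form a minimal basis of Col(P), N ∈ F[λ]^{n×(n−r)} is a matrix whose columns form a minimal basis of N_r(P), and R ∈ F[λ]^{r×n} is a matrix whose rows form a minimal basis of Row(P). Then the sum of the row degrees of M equals the sum of the column degrees of L, and the sum of the column degrees of N equals the sum of the row degrees of R. (Equivalently: the sum of the minimal indices of N_ℓ(P) equals the sum of the minimal indices of Col(P), and the sum of the minimal indices of N_r(P) equals the sum of the minimal indices of Row(P).) -/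
open Polynomial Matrix

noncomputable section

variable {F : Type*} [Field F]

/-- The matrix over the field of rational functions associated with a polynomial matrix. -/
def toRat {m n : ℕ} (P : Matrix (Fin m) (Fin n) F[X]) : Matrix (Fin m) (Fin n) (RatFunc F) :=
  P.map (algebraMap F[X] (RatFunc F))

/-- The normal rank of a polynomial matrix: its rank over the field of rational functions. -/
def normalRank {m n : ℕ} (P : Matrix (Fin m) (Fin n) F[X]) : ℕ := (toRat P).rank

/-- The degree of a polynomial matrix: the maximum of the degrees of its entries,
`⊥` (i.e. -∞) for the zero matrix. -/
def matDeg {m n : ℕ} (P : Matrix (Fin m) (Fin n) F[X]) : WithBot ℕ :=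
  Finset.univ.sup fun i : Fin m => Finset.univ.sup fun j : Fin n => (P i j).degree

/-- Degree of the i-th row. -/
def rowDeg {m n : ℕ} (P : Matrix (Fin m) (Fin n) F[X]) (i : Fin m) : WithBot ℕ :=
  Finset.univ.sup fun j : Fin n => (P i j).degree

/-- Degree of the j-th column. -/
def colDeg {m n : ℕ} (P : Matrix (Fin m) (Fin n) F[X]) (j : Fin n) : WithBot ℕ :=
  Finset.univ.sup fun i : Fin m => (P i j).degree

/-- Degree of the i-th row as a natural number (0 for a zero row). -/
def rowDegNat {m n : ℕ} (P : Matrix (Fin m) (Fin n) F[X]) (i : Fin m) : ℕ :=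
  Finset.univ.sup fun j : Fin n => (P i j).natDegree

/-- Degree of the j-th column as a natural number (0 for a zero column). -/
def colDegNat {m n : ℕ} (P : Matrix (Fin m) (Fin n) F[X]) (j : Fin n) : ℕ :=
  Finset.univ.sup fun i : Fin m => (P i j).natDegree

/-- Highest-row-degree coefficient matrix. -/
def hrMatrix {m n : ℕ} (P : Matrix (Fin m) (Fin n) F[X]) : Matrix (Fin m) (Fin n) F :=
  Matrix.of fun i j => (P i j).coeff (rowDegNat P i)

/-- Highest-column-degree coefficient matrix. -/
def hcMatrix {m n : ℕ} (P : Matrix (Fin m) (Fin n) F[X]) : Matrix (Fin m) (Fin n) F :=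
  Matrix.of fun i j => (P i j).coeff (colDegNat P j)

/-- A polynomial matrix is row reduced if its highest-row-degree coefficient matrix has
full row rank. -/
def RowReduced {m n : ℕ} (P : Matrix (Fin m) (Fin n) F[X]) : Prop := (hrMatrix P).rank = m

/-- A polynomial matrix is column reduced if its highest-column-degree coefficient matrix has
full column rank. -/
def ColReduced {m n : ℕ} (P : Matrix (Fin m) (Fin n) F[X]) : Prop := (hcMatrix P).rank = n

/-- Evaluation of a polynomial matrix at a point of the algebraic closure. -/
def evalMat {m n : ℕ} (P : Matrix (Fin m) (Fin n) F[X]) (x : AlgebraicClosure F) :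
    Matrix (Fin m) (Fin n) (AlgebraicClosure F) :=
  Matrix.of fun i j => aeval x (P i j)

/-- The rows of `P` form a minimal basis of the rational subspace they span (Forney's
characterization): full row rank at every point of the algebraic closure, and row reduced. -/
def IsMinimalRowBasis {m n : ℕ} (P : Matrix (Fin m) (Fin n) F[X]) : Prop :=
  (∀ x : AlgebraicClosure F, (evalMat P x).rank = m) ∧ RowReduced P

/-- The columns of `P` form a minimal basis of the rational subspace they span. -/
def IsMinimalColBasis {m n : ℕ} (P : Matrix (Fin m) (Fin n) F[X]) : Prop :=
  (∀ x : AlgebraicClosure F, (evalMat P x).rank = n) ∧ ColReduced P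

/-- The column space Col(P) over the field of rational functions. -/
def colSpace {m n : ℕ} (P : Matrix (Fin m) (Fin n) F[X]) :
    Submodule (RatFunc F) (Fin m → RatFunc F) :=
  LinearMap.range (toRat P).mulVecLin

/-- The row space Row(P) over the field of rational functions. -/
def rowSpace {m n : ℕ} (P : Matrix (Fin m) (Fin n) F[X]) :
    Submodule (RatFunc F) (Fin n → RatFunc F) :=
  LinearMap.range (toRat P)ᵀ.mulVecLin

/-- The right nullspace N_r(P). -/
def rightNull {m n : ℕ} (P : Matrix (Fin m) (Fin n) F[X]) :
    Submodule (RatFunc F) (Fin n → RatFunc F) :=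
  LinearMap.ker (toRat P).mulVecLin

/-- The left nullspace N_ℓ(P). -/
def leftNull {m n : ℕ} (P : Matrix (Fin m) (Fin n) F[X]) :
    Submodule (RatFunc F) (Fin m → RatFunc F) :=
  LinearMap.ker (toRat P)ᵀ.mulVecLin

section Helpers


lemma coeff_prod_of_deg_le {ι : Type*} (s : Finset ι) (f : ι → F[X]) (d : ι → ℕ)
    (h : ∀ i ∈ s, (f i).natDegree ≤ d i) :
    (∏ i ∈ s, f i).coeff (∑ i ∈ s, d i) = ∏ i ∈ s, (f i).coeff (d i) := by
  classical
  induction s using Finset.induction_on with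
  | empty => simp
  | @insert a s' hx ih =>
    rw [Finset.prod_insert hx, Finset.sum_insert hx, Finset.prod_insert hx,
      Polynomial.coeff_mul_add_eq_of_natDegree_le (h a (Finset.mem_insert_self a s'))
        (Polynomial.natDegree_prod_le _ _ |>.trans (Finset.sum_le_sum fun i hi => h i (Finset.mem_insert_of_mem hi))),
      ih fun i hi => h i (Finset.mem_insert_of_mem hi)]

lemma natDegree_det_le {k : ℕ} (A : Matrix (Fin k) (Fin k) F[X]) (d : Fin k → ℕ)
    (h : ∀ i j, (A i j).natDegree ≤ d i) :
    (A.det).natDegree ≤ ∑ i, d i := by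
  rw [Matrix.det_apply]
  refine (Polynomial.natDegree_sum_le _ _).trans ?_
  rw [Finset.fold_max_le]
  refine ⟨Nat.zero_le _, fun σ _ => ?_⟩
  simp only [Function.comp]
  have h1 : ((Equiv.Perm.sign σ : ℤˣ) • ∏ i, A (σ i) i).natDegree = (∏ i, A (σ i) i).natDegree := by
    rcases Int.units_eq_one_or (Equiv.Perm.sign σ) with hs | hs <;>
      simp [hs, Units.smul_def]
  rw [h1]
  refine (Polynomial.natDegree_prod_le _ _).trans ?_
  calc ∑ i, (A (σ i) i).natDegree ≤ ∑ i, d (σ i) := Finset.sum_le_sum fun i _ => h _ i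
    _ = ∑ i, d i := Equiv.sum_comp σ d

lemma coeff_det_top {k : ℕ} (A : Matrix (Fin k) (Fin k) F[X]) (d : Fin k → ℕ)
    (h : ∀ i j, (A i j).natDegree ≤ d i) :
    (A.det).coeff (∑ i, d i) = (Matrix.of fun i j => (A i j).coeff (d i)).det := by
  rw [Matrix.det_apply, Matrix.det_apply, Polynomial.finset_sum_coeff]
  refine Finset.sum_congr rfl fun σ _ => ?_
  have h2 : (∏ i, A (σ i) i).coeff (∑ i, d i) = ∏ i, (A (σ i) i).coeff (d (σ i)) := by
    rw [← Equiv.sum_comp σ d]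
    exact coeff_prod_of_deg_le _ _ _ fun i _ => h _ i
  rcases Int.units_eq_one_or (Equiv.Perm.sign σ) with hs | hs <;>
    simp [hs, Units.smul_def, h2, Matrix.of_apply]


lemma exists_sub_det_ne_zero {𝔽 : Type*} [Field 𝔽] {a s : ℕ}
    (C : Matrix (Fin a) (Fin s) 𝔽) (h : C.rank = a) :
    ∃ J : Fin a → Fin s, Function.Injective J ∧ (C.submatrix id J).det ≠ 0 := by
  classical
  have hsp : Submodule.span 𝔽 (Set.range Cᵀ) = ⊤ := by
    apply Submodule.eq_top_of_finrank_eq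
    rw [show Set.range Cᵀ = Set.range C.col from rfl, ← Matrix.rank_eq_finrank_span_cols, h, Module.finrank_fintype_fun_eq_card,
      Fintype.card_fin]
  obtain ⟨b, hbsub, hbspan, hbind⟩ := exists_linearIndependent 𝔽 (Set.range Cᵀ)
  have hbfin : b.Finite := (Set.finite_range Cᵀ).subset hbsub
  haveI : Fintype b := hbfin.fintype
  have hcard : Fintype.card b = a := by
    have h1 : Module.finrank 𝔽 (Submodule.span 𝔽 b) = b.toFinset.card :=
      finrank_span_set_eq_card hbind
    rw [hbspan, hsp, finrank_top, Module.finrank_fintype_fun_eq_card, Fintype.card_fin] at h1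
    rw [Set.toFinset_card] at h1
    omega
  let ec : Fin a ≃ b := (Fintype.equivFinOfCardEq hcard).symm
  have hch : ∀ x : b, ∃ j : Fin s, Cᵀ j = (x : Fin a → 𝔽) := fun x => hbsub x.2
  choose ch hch' using hch
  refine ⟨fun i => ch (ec i), ?_, ?_⟩
  · intro i i' hii
    have : (ec i : Fin a → 𝔽) = (ec i' : Fin a → 𝔽) := by
      rw [← hch' (ec i), ← hch' (ec i')]
      exact congrArg Cᵀ hii
    exact ec.injective (Subtype.ext this)
  · have hind : LinearIndependent 𝔽 (fun i => (C.submatrix id fun i => ch (ec i))ᵀ i) := by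
      have : (fun i => (C.submatrix id fun i => ch (ec i))ᵀ i)
          = (fun x : b => (x : Fin a → 𝔽)) ∘ ec := by
        funext i
        ext r
        have := congrFun (hch' (ec i)) r
        simpa [Matrix.submatrix, Matrix.transpose] using this
      rw [this]
      exact hbind.comp ec ec.injective
    have := Matrix.linearIndependent_cols_iff_isUnit.mp hind
    have hdet := Matrix.isUnit_iff_isUnit_det _ |>.mp this
    exact hdet.ne_zero

lemma exists_extend_inl {a b m : ℕ} (h : a + b = m) (J : Fin a → Fin m)
    (hJ : Function.Injective J) :
    ∃ e : Fin a ⊕ Fin b ≃ Fin m, ∀ i, e (Sum.inl i) = J i := by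
  classical
  have hc1 : Fintype.card (Set.range J) = a := by
    rw [Set.card_range_of_injective hJ, Fintype.card_fin]
  have hc2 : Fintype.card ((Set.range J)ᶜ : Set (Fin m)) = b := by
    have := Fintype.card_compl_set (Set.range J)
    rw [this, hc1, Fintype.card_fin]; omega
  let e1 : Fin a ≃ Set.range J := (Equiv.ofInjective J hJ)
  let e2 : Fin b ≃ ((Set.range J)ᶜ : Set (Fin m)) :=
    (Fintype.equivFinOfCardEq hc2).symm
  refine ⟨(Equiv.sumCongr e1 e2).trans (Equiv.Set.sumCompl (Set.range J)), fun i => ?_⟩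
  simp [e1]

lemma exists_extend_inr {a b m : ℕ} (h : a + b = m) (J : Fin b → Fin m)
    (hJ : Function.Injective J) :
    ∃ e : Fin a ⊕ Fin b ≃ Fin m, ∀ k, e (Sum.inr k) = J k := by
  obtain ⟨e', he'⟩ := exists_extend_inl (a := b) (b := a) (by omega) J hJ
  exact ⟨(Equiv.sumComm (Fin a) (Fin b)).trans e', fun k => he' k⟩


lemma entry_natDeg_le {p m : ℕ} (A : Matrix (Fin p) (Fin m) F[X]) (i : Fin p) (j : Fin m) :
    (A i j).natDegree ≤ rowDegNat A i :=
  Finset.le_sup (f := fun j => (A i j).natDegree) (Finset.mem_univ j)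

lemma gdeg_le {p m : ℕ} (A : Matrix (Fin p) (Fin m) F[X]) (J : Fin p → Fin m) :
    ((A.submatrix id J).det).degree ≤ ((∑ i, rowDegNat A i : ℕ) : WithBot ℕ) := by
  refine Polynomial.degree_le_natDegree.trans ?_
  exact_mod_cast Nat.cast_le.mpr
    (natDegree_det_le (A.submatrix id J) (rowDegNat A) fun i j => entry_natDeg_le A i (J j))

lemma gmax {p m : ℕ} (A : Matrix (Fin p) (Fin m) F[X]) (hArr : (hrMatrix A).rank = p) :
    ∃ J : Fin p → Fin m, Function.Injective J ∧
      ((A.submatrix id J).det).degree = ((∑ i, rowDegNat A i : ℕ) : WithBot ℕ) := by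
  obtain ⟨J, hJ, hdet⟩ := exists_sub_det_ne_zero (hrMatrix A) hArr
  refine ⟨J, hJ, le_antisymm (gdeg_le A J) ?_⟩
  apply Polynomial.le_degree_of_ne_zero
  rw [coeff_det_top (A.submatrix id J) (rowDegNat A) fun i j => entry_natDeg_le A i (J j)]
  have heq : (Matrix.of fun i j => ((A.submatrix id J) i j).coeff (rowDegNat A i))
      = (hrMatrix A).submatrix id J := rfl
  rw [heq]
  exact hdet

lemma gx {p m : ℕ} (A : Matrix (Fin p) (Fin m) F[X])
    (hAx : ∀ x : AlgebraicClosure F, (evalMat A x).rank = p) (x : AlgebraicClosure F) :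
    ∃ J : Fin p → Fin m, Function.Injective J ∧ aeval x ((A.submatrix id J).det) ≠ 0 := by
  obtain ⟨J, hJ, hdet⟩ := exists_sub_det_ne_zero (evalMat A x) (hAx x)
  refine ⟨J, hJ, ?_⟩
  have : aeval x ((A.submatrix id J).det) = ((evalMat A x).submatrix id J).det := by
    rw [AlgHom.map_det]
    congr 1
  rw [this]
  exact hdet

lemma dvd_all_degree_zero {F : Type*} [Field F] {ι : Sort*} (u : F[X]) (hu : u ≠ 0)
    (f : ι → F[X]) (hdvd : ∀ i, u ∣ f i)
    (hx : ∀ x : AlgebraicClosure F, ∃ i, (aeval x) (f i) ≠ 0) : u.degree = 0 := by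
  refine le_antisymm ?_ (Polynomial.zero_le_degree_iff.mpr hu)
  by_contra hlt
  push_neg at hlt
  have hmapdeg : (u.map (algebraMap F (AlgebraicClosure F))).degree ≠ 0 := by
    rw [Polynomial.degree_map_eq_of_injective (algebraMap F (AlgebraicClosure F)).injective]
    exact hlt.ne'
  obtain ⟨x, hx0⟩ := IsAlgClosed.exists_root _ hmapdeg
  have haev : (aeval x) u = 0 := by
    rwa [Polynomial.aeval_def, ← Polynomial.eval_map]
  obtain ⟨i, hi⟩ := hx x
  obtain ⟨c, hc⟩ := hdvd i
  exact hi (by rw [hc, _root_.map_mul, haev, zero_mul])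

section LemA

variable {F : Type*} [Field F] {p q m : ℕ}

/-- The stacked matrix: rows of `A` together with unit rows selected by `e ∘ Sum.inr`,
with columns indexed through `e0`. -/
def stackM (e0 e : Fin p ⊕ Fin q ≃ Fin m) (A : Matrix (Fin p) (Fin m) F[X]) :
    Matrix (Fin p ⊕ Fin q) (Fin p ⊕ Fin q) F[X] :=
  Matrix.of fun c d =>
    Sum.elim (fun i => A i (e0 d)) (fun k => if e0 d = e (Sum.inr k) then 1 else 0) c

lemma stackM_det (e0 e : Fin p ⊕ Fin q ≃ Fin m) (A : Matrix (Fin p) (Fin m) F[X]) :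
    (A.submatrix id (⇑e ∘ Sum.inl)).det
      = (Equiv.Perm.sign (e.trans e0.symm) : F[X]) * (stackM e0 e A).det := by
  have hCe : (stackM e0 e A).submatrix id ⇑(e.trans e0.symm)
      = Matrix.fromBlocks (A.submatrix id (⇑e ∘ Sum.inl)) (A.submatrix id (⇑e ∘ Sum.inr))
          0 1 := by
    refine Matrix.ext fun c d => ?_
    cases c with
    | inl i =>
      cases d with
      | inl i' => simp [stackM, Matrix.fromBlocks]
      | inr k => simp [stackM, Matrix.fromBlocks]
    | inr k =>
      cases d with
      | inl i' =>
        have : e (Sum.inl i') ≠ e (Sum.inr k) := fun h => by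
          have := e.injective h; exact Sum.inl_ne_inr this
        simp [stackM, Matrix.fromBlocks, this]
      | inr k' =>
        by_cases hkk : k' = k
        · simp [stackM, Matrix.fromBlocks, hkk, Matrix.one_apply]
        · simp [stackM, Matrix.fromBlocks, Matrix.one_apply, Equiv.apply_eq_iff_eq,
            hkk, Ne.symm hkk]
  have := Matrix.det_permute' (e.trans e0.symm) (stackM e0 e A)
  rw [hCe] at this
  rw [← this, Matrix.det_fromBlocks_zero₂₁, Matrix.det_one, mul_one]

lemma stackM_pm (e0 e : Fin p ⊕ Fin q ≃ Fin m) (A : Matrix (Fin p) (Fin m) F[X]) :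
    (A.submatrix id (⇑e ∘ Sum.inl)).det = (stackM e0 e A).det
      ∨ (A.submatrix id (⇑e ∘ Sum.inl)).det = -(stackM e0 e A).det := by
  rcases Int.units_eq_one_or (Equiv.Perm.sign (e.trans e0.symm)) with hs | hs
  · left; rw [stackM_det e0 e A, hs]; simp
  · right; rw [stackM_det e0 e A, hs]; simp

end LemA

section LemA2

variable {F : Type*} [Field F] {p q m : ℕ}

def bmatD (e : Fin p ⊕ Fin q ≃ Fin m) (B : Matrix (Fin q) (Fin m) F[X]) :
    Matrix (Fin q) (Fin q) F[X] :=
  Matrix.of fun k j => B j (e (Sum.inr k))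

def zmatD (e : Fin p ⊕ Fin q ≃ Fin m) (B : Matrix (Fin q) (Fin m) F[X]) :
    Matrix (Fin p ⊕ Fin q) (Fin q) F[X] :=
  Matrix.of fun c j => Sum.elim (fun _ => (0 : F[X])) (fun k => B j (e (Sum.inr k))) c

def LzD (e0 : Fin p ⊕ Fin q ≃ Fin m) (B : Matrix (Fin q) (Fin m) F[X]) :
    Matrix (Fin p ⊕ Fin q) (Fin q) F[X] :=
  (Bᵀ).submatrix ⇑e0 id

lemma hprodD (e0 e : Fin p ⊕ Fin q ≃ Fin m) (A : Matrix (Fin p) (Fin m) F[X])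
    (B : Matrix (Fin q) (Fin m) F[X]) (hAB : A * Bᵀ = 0) :
    stackM e0 e A * LzD e0 B = zmatD e B := by
  refine Matrix.ext fun c j => ?_
  cases c with
  | inl i =>
    rw [Matrix.mul_apply]
    have h1 : ∀ d, stackM e0 e A (Sum.inl i) d * LzD e0 B d j
        = A i (e0 d) * B j (e0 d) := fun d => rfl
    calc ∑ d, stackM e0 e A (Sum.inl i) d * LzD e0 B d j
        = ∑ d, A i (e0 d) * B j (e0 d) := Finset.sum_congr rfl fun d _ => h1 d
      _ = ∑ z, A i z * B j z := Equiv.sum_comp e0 fun z => A i z * B j z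
      _ = (A * Bᵀ) i j := by rw [Matrix.mul_apply]; rfl
      _ = 0 := by rw [hAB]; rfl
      _ = zmatD e B (Sum.inl i) j := rfl
  | inr k =>
    classical
    rw [Matrix.mul_apply]
    have key : ∀ d, stackM e0 e A (Sum.inr k) d * LzD e0 B d j
        = if d = e0.symm (e (Sum.inr k)) then B j (e (Sum.inr k)) else 0 := by
      intro d
      by_cases hd : d = e0.symm (e (Sum.inr k))
      · subst hd
        simp [stackM, LzD]
      · have hne : e0 d ≠ e (Sum.inr k) := fun h => hd (by rw [← h]; simp)
        simp [stackM, LzD, hne, hd]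
    calc ∑ d, stackM e0 e A (Sum.inr k) d * LzD e0 B d j
        = ∑ d, if d = e0.symm (e (Sum.inr k)) then B j (e (Sum.inr k)) else 0 :=
          Finset.sum_congr rfl fun d _ => key d
      _ = B j (e (Sum.inr k)) := by rw [Finset.sum_ite_eq' Finset.univ]; simp
      _ = zmatD e B (Sum.inr k) j := rfl

theorem lemA (e0 : Fin p ⊕ Fin q ≃ Fin m)
    (A : Matrix (Fin p) (Fin m) F[X]) (B : Matrix (Fin q) (Fin m) F[X])
    (hAB : A * Bᵀ = 0)
    (hAx : ∀ x : AlgebraicClosure F, (evalMat A x).rank = p)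
    (hArr : (hrMatrix A).rank = p)
    (hBx : ∀ x : AlgebraicClosure F, (evalMat B x).rank = q)
    (hBrr : (hrMatrix B).rank = q) :
    ∑ i, rowDegNat A i = ∑ k, rowDegNat B k := by
  classical
  have hpq : p + q = m := by
    have := Fintype.card_congr e0
    simpa using this
  set S := ∑ i, rowDegNat A i with hS
  set T := ∑ k, rowDegNat B k with hT
  have hinj : Function.Injective ⇑(algebraMap F[X] (RatFunc F)) :=
    RatFunc.algebraMap_injective F
  -- choose the maximizing bijection for A
  obtain ⟨Js, hJsinj, hJsdeg⟩ := gmax A hArr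
  obtain ⟨es, hes⟩ := exists_extend_inl hpq Js hJsinj
  have hesJ : ⇑es ∘ Sum.inl = Js := funext hes
  have hgs : ((A.submatrix id (⇑es ∘ Sum.inl)).det).degree = (S : WithBot ℕ) := by
    rw [hesJ]; exact hJsdeg
  have hphis_deg : ((stackM e0 es A).det).degree = (S : WithBot ℕ) := by
    rcases stackM_pm e0 es A with h | h
    · rw [h] at hgs; exact hgs
    · rw [h, Polynomial.degree_neg] at hgs; exact hgs
  have hphis_ne : (stackM e0 es A).det ≠ 0 := by
    intro h0
    rw [h0, Polynomial.degree_zero] at hphis_deg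
    exact absurd hphis_deg.symm (by simp)
  -- rational-function side
  set XK : (Fin p ⊕ Fin q ≃ Fin m) → Matrix (Fin p ⊕ Fin q) (Fin p ⊕ Fin q) (RatFunc F) :=
    fun e => (stackM e0 e A).map ⇑(algebraMap F[X] (RatFunc F)) with hXK
  have hdetXK : ∀ e, (XK e).det = algebraMap F[X] (RatFunc F) ((stackM e0 e A).det) :=
    fun e => ((algebraMap F[X] (RatFunc F)).map_det _).symm
  have hXsunit : IsUnit (XK es).det := by
    rw [hdetXK, isUnit_iff_ne_zero]
    exact fun h0 => hphis_ne (hinj (by rw [h0, map_zero]))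
  set W : (Fin p ⊕ Fin q ≃ Fin m) → Matrix (Fin p ⊕ Fin q) (Fin p ⊕ Fin q) (RatFunc F) :=
    fun e => XK e * (XK es)⁻¹ with hW
  have hWtop : ∀ e i, W e (Sum.inl i)
      = (1 : Matrix (Fin p ⊕ Fin q) (Fin p ⊕ Fin q) (RatFunc F)) (Sum.inl i) := by
    intro e i
    funext c
    have hrow : ∀ d, XK e (Sum.inl i) d = XK es (Sum.inl i) d := fun d => rfl
    have : W e (Sum.inl i) c = (XK es * (XK es)⁻¹) (Sum.inl i) c := by
      rw [hW]
      simp only [Matrix.mul_apply]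
      exact Finset.sum_congr rfl fun d _ => by rw [hrow d]
    rw [this, Matrix.mul_nonsing_inv _ hXsunit]
  set v : (Fin p ⊕ Fin q ≃ Fin m) → Matrix (Fin q) (Fin q) (RatFunc F) :=
    fun e => (W e).toBlocks₂₂ with hv
  have hdetW : ∀ e, (W e).det = (v e).det := by
    intro e
    conv_lhs => rw [← Matrix.fromBlocks_toBlocks (W e)]
    have h11 : (W e).toBlocks₁₁ = 1 := by
      refine Matrix.ext fun i i' => ?_
      have := congrFun (hWtop e i) (Sum.inl i')
      simp only [Matrix.toBlocks₁₁, Matrix.of_apply]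
      rw [this]
      simp [Matrix.one_apply]
    have h12 : (W e).toBlocks₁₂ = 0 := by
      refine Matrix.ext fun i k => ?_
      have := congrFun (hWtop e i) (Sum.inr k)
      simp only [Matrix.toBlocks₁₂, Matrix.of_apply]
      rw [this]
      simp [Matrix.one_apply]
    rw [h11, h12, Matrix.det_fromBlocks_zero₁₂, Matrix.det_one, one_mul]
  have hXdec : ∀ e, XK e = W e * XK es := by
    intro e
    rw [hW]
    exact (Matrix.nonsing_inv_mul_cancel_right (XK es) (XK e) hXsunit).symm
  have hdetphi : ∀ e, algebraMap F[X] (RatFunc F) ((stackM e0 e A).det)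
      = (v e).det * algebraMap F[X] (RatFunc F) ((stackM e0 es A).det) := by
    intro e
    rw [← hdetXK, ← hdetXK, hXdec e, Matrix.det_mul, hdetW e]
  have hXL : ∀ e, XK e * (LzD e0 B).map ⇑(algebraMap F[X] (RatFunc F))
      = (zmatD e B).map ⇑(algebraMap F[X] (RatFunc F)) := by
    intro e
    rw [hXK, ← Matrix.map_mul, hprodD e0 e A B hAB]
  have hbK : ∀ e, (bmatD e B).map ⇑(algebraMap F[X] (RatFunc F))
      = v e * (bmatD es B).map ⇑(algebraMap F[X] (RatFunc F)) := by
    intro e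
    refine Matrix.ext fun k j => ?_
    have h1 : (bmatD e B).map ⇑(algebraMap F[X] (RatFunc F)) k j
        = ((zmatD e B).map ⇑(algebraMap F[X] (RatFunc F))) (Sum.inr k) j := rfl
    rw [h1, ← hXL e, hXdec e, Matrix.mul_assoc, hXL es]
    rw [Matrix.mul_apply, Matrix.mul_apply, Fintype.sum_sum_type]
    have hz : ∀ i : Fin p,
        W e (Sum.inr k) (Sum.inl i)
          * ((zmatD es B).map ⇑(algebraMap F[X] (RatFunc F))) (Sum.inl i) j = 0 := by
      intro i
      have : ((zmatD es B).map ⇑(algebraMap F[X] (RatFunc F))) (Sum.inl i) j = 0 := by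
        simp [zmatD]
      rw [this, mul_zero]
    rw [Finset.sum_congr rfl fun i _ => hz i, Finset.sum_const_zero, zero_add]
    rfl
  have hdeth : ∀ e, algebraMap F[X] (RatFunc F) ((bmatD e B).det)
      = (v e).det * algebraMap F[X] (RatFunc F) ((bmatD es B).det) := by
    intro e
    rw [RingHom.map_det, RingHom.map_det, RingHom.mapMatrix_apply,
      RingHom.mapMatrix_apply, hbK e, Matrix.det_mul]
  have hstar : ∀ e, (stackM e0 e A).det * (bmatD es B).det
      = (stackM e0 es A).det * (bmatD e B).det := by
    intro e
    apply hinj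
    rw [_root_.map_mul, _root_.map_mul, hdetphi e, hdeth e]
    ring
  -- nonvanishing families
  have hphix : ∀ x : AlgebraicClosure F, ∃ e, (aeval x) ((stackM e0 e A).det) ≠ 0 := by
    intro x
    obtain ⟨J, hJinj, hJne⟩ := gx A hAx x
    obtain ⟨e, he⟩ := exists_extend_inl hpq J hJinj
    have heJ : ⇑e ∘ Sum.inl = J := funext he
    rw [← heJ] at hJne
    refine ⟨e, ?_⟩
    rcases stackM_pm e0 e A with h | h
    · rw [h] at hJne; exact hJne
    · rw [h, map_neg] at hJne
      exact fun h0 => hJne (by rw [h0, neg_zero])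
  have hhx : ∀ x : AlgebraicClosure F, ∃ e : Fin p ⊕ Fin q ≃ Fin m, (aeval x) ((bmatD e B).det) ≠ 0 := by
    intro x
    obtain ⟨J, hJinj, hJne⟩ := gx B hBx x
    obtain ⟨e, he⟩ := exists_extend_inr hpq J hJinj
    refine ⟨e, ?_⟩
    have hbt : (bmatD e B).det = (B.submatrix id (⇑e ∘ Sum.inr)).det := by
      rw [show bmatD e B = (B.submatrix id (⇑e ∘ Sum.inr))ᵀ from rfl, Matrix.det_transpose]
    rw [hbt, show ⇑e ∘ Sum.inr = J from funext he]
    exact hJne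
  have hhs_ne : (bmatD es B).det ≠ 0 := by
    obtain ⟨e1, he1⟩ := hhx 0
    have h1 : (bmatD e1 B).det ≠ 0 := fun h0 => he1 (by rw [h0, map_zero])
    intro h0
    have h2 := hstar e1
    rw [h0, mul_zero] at h2
    exact (mul_ne_zero hphis_ne h1) h2.symm
  -- gcd of the two reference minors
  letI : GCDMonoid F[X] := EuclideanDomain.gcdMonoid _
  set a := (stackM e0 es A).det with ha
  set b := (bmatD es B).det with hb
  set d := GCDMonoid.gcd a b with hd
  have hdne : d ≠ 0 := _root_.gcd_ne_zero_of_right hhs_ne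
  have ha' : d * (a / d) = a := EuclideanDomain.mul_div_cancel' hdne (gcd_dvd_left a b)
  have hb' : d * (b / d) = b := EuclideanDomain.mul_div_cancel' hdne (gcd_dvd_right a b)
  have hco : IsCoprime (a / d) (b / d) := _root_.isCoprime_div_gcd_div_gcd hhs_ne
  have hstar' : ∀ e, (stackM e0 e A).det * (b / d) = (a / d) * (bmatD e B).det := by
    intro e
    apply mul_left_cancel₀ hdne
    calc d * ((stackM e0 e A).det * (b / d)) = (stackM e0 e A).det * (d * (b / d)) := by ring
      _ = (stackM e0 e A).det * b := by rw [hb']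
      _ = a * (bmatD e B).det := hstar e
      _ = (d * (a / d)) * (bmatD e B).det := by rw [ha']
      _ = d * ((a / d) * (bmatD e B).det) := by ring
  have hadvd : ∀ e, (a / d) ∣ (stackM e0 e A).det := by
    intro e
    have hdv : (a / d) ∣ (stackM e0 e A).det * (b / d) :=
      ⟨(bmatD e B).det, hstar' e⟩
    exact hco.dvd_of_dvd_mul_right hdv
  have hbdvd : ∀ e : Fin p ⊕ Fin q ≃ Fin m, (b / d) ∣ (bmatD e B).det := by
    intro e
    have hdv : (b / d) ∣ (a / d) * (bmatD e B).det :=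
      ⟨(stackM e0 e A).det, by rw [← hstar' e]; ring⟩
    exact hco.symm.dvd_of_dvd_mul_left hdv
  have hane : a / d ≠ 0 := _root_.left_div_gcd_ne_zero hphis_ne
  have hbne2 : b / d ≠ 0 := _root_.right_div_gcd_ne_zero hhs_ne
  have hadeg : (a / d).degree = 0 := dvd_all_degree_zero _ hane _ hadvd hphix
  have hbdeg : (b / d).degree = 0 := dvd_all_degree_zero _ hbne2 _ hbdvd hhx
  have hab : a.degree = b.degree := by
    rw [← ha', ← hb', Polynomial.degree_mul, Polynomial.degree_mul, hadeg, hbdeg]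
  have hbbot : b.degree ≠ ⊥ := fun h => hhs_ne (Polynomial.degree_eq_bot.mp h)
  have hdegeq : ∀ e, ((stackM e0 e A).det).degree = ((bmatD e B).det).degree := by
    intro e
    have h1 := congrArg Polynomial.degree (hstar e)
    rw [Polynomial.degree_mul, Polynomial.degree_mul, hab] at h1
    rw [add_comm (b.degree) (((bmatD e B).det).degree)] at h1
    exact WithBot.add_right_cancel hbbot h1
  -- conclude
  have hfin1 : (S : WithBot ℕ) ≤ (T : WithBot ℕ) := by
    have h1 := hdegeq es
    rw [hphis_deg] at h1
    have h2 : ((bmatD es B).det).degree ≤ (T : WithBot ℕ) := by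
      have hbt : (bmatD es B).det = (B.submatrix id (⇑es ∘ Sum.inr)).det := by
        rw [show bmatD es B = (B.submatrix id (⇑es ∘ Sum.inr))ᵀ from rfl, Matrix.det_transpose]
      rw [hbt]
      exact gdeg_le B (⇑es ∘ Sum.inr)
    rw [← h1] at h2
    exact h2
  have hfin2 : (T : WithBot ℕ) ≤ (S : WithBot ℕ) := by
    obtain ⟨Jt, hJtinj, hJtdeg⟩ := gmax B hBrr
    obtain ⟨et, het⟩ := exists_extend_inr hpq Jt hJtinj
    have hbt : (bmatD et B).det = (B.submatrix id (⇑et ∘ Sum.inr)).det := by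
      rw [show bmatD et B = (B.submatrix id (⇑et ∘ Sum.inr))ᵀ from rfl, Matrix.det_transpose]
    have h1 : ((bmatD et B).det).degree = (T : WithBot ℕ) := by
      rw [hbt, show ⇑et ∘ Sum.inr = Jt from funext het]
      exact hJtdeg
    have h2 : ((stackM e0 et A).det).degree ≤ (S : WithBot ℕ) := by
      rcases stackM_pm e0 et A with h | h
      · rw [← h]; exact gdeg_le A (⇑et ∘ Sum.inl)
      · have := gdeg_le A (⇑et ∘ Sum.inl)
        rw [h, Polynomial.degree_neg] at this
        exact this
    rw [← h1, ← hdegeq et]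
    exact h2
  exact_mod_cast le_antisymm hfin1 hfin2

end LemA2

section Conv

variable {F : Type*} [Field F]

lemma row_nonzero {p m' : ℕ} (A : Matrix (Fin p) (Fin m') F[X])
    (hArr : (hrMatrix A).rank = p) (i : Fin p) : ∃ j, A i j ≠ 0 := by
  obtain ⟨J, hJ, hdet⟩ := exists_sub_det_ne_zero (hrMatrix A) hArr
  by_contra hall
  push_neg at hall
  apply hdet
  apply Matrix.det_eq_zero_of_row_eq_zero i
  intro j
  have h0 : A i (J j) = 0 := hall (J j)
  simp [hrMatrix, h0]

lemma rowDeg_cast {m' n' : ℕ} (P : Matrix (Fin m') (Fin n') F[X]) (i : Fin m')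
    (h : ∃ j, P i j ≠ 0) : rowDeg P i = (rowDegNat P i : WithBot ℕ) := by
  obtain ⟨j1, hj1⟩ := h
  apply le_antisymm
  · refine Finset.sup_le fun j _ => ?_
    refine Polynomial.degree_le_natDegree.trans ?_
    exact_mod_cast Finset.le_sup (f := fun j => (P i j).natDegree) (Finset.mem_univ j)
  · obtain ⟨j0, _, hj0⟩ := Finset.exists_mem_eq_sup Finset.univ ⟨j1, Finset.mem_univ j1⟩
      (fun j => (P i j).natDegree)
    by_cases h0 : P i j0 = 0
    · rw [show rowDegNat P i = (P i j0).natDegree from hj0, h0, Polynomial.natDegree_zero]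
      have h1 : (0 : WithBot ℕ) ≤ (P i j1).degree := Polynomial.zero_le_degree_iff.mpr hj1
      have h2 := h1.trans (Finset.le_sup (f := fun j => (P i j).degree) (Finset.mem_univ j1))
      exact_mod_cast h2
    · rw [show rowDegNat P i = (P i j0).natDegree from hj0, ← Polynomial.degree_eq_natDegree h0]
      exact Finset.le_sup (f := fun j => (P i j).degree) (Finset.mem_univ j0)

end Conv

end Helpers

section Main

lemma prod_zero_left {F : Type*} [Field F] {m n r : ℕ}
    (P : Matrix (Fin m) (Fin n) F[X]) (M : Matrix (Fin (m - r)) (Fin m) F[X])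
    (L : Matrix (Fin m) (Fin r) F[X])
    (hMspan : rowSpace M = leftNull P) (hLspan : colSpace L = colSpace P) :
    M * L = 0 := by
  classical
  have hinj : Function.Injective ⇑(algebraMap F[X] (RatFunc F)) :=
    RatFunc.algebraMap_injective F
  have h0 : toRat M * toRat L = 0 := by
    refine Matrix.ext fun i j => ?_
    have hrowmem : (fun k => toRat M i k) ∈ leftNull P := by
      rw [← hMspan]
      refine ⟨Pi.single i 1, ?_⟩
      rw [Matrix.mulVecLin_apply, Matrix.mulVec_single]
      funext k
      simp
    have hrow := LinearMap.mem_ker.mp hrowmem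
    rw [Matrix.mulVecLin_apply] at hrow
    have hcolmem : (fun k => toRat L k j) ∈ colSpace P := by
      rw [← hLspan]
      refine ⟨Pi.single j 1, ?_⟩
      rw [Matrix.mulVecLin_apply, Matrix.mulVec_single]
      funext k
      simp
    obtain ⟨vv, hvv⟩ := hcolmem
    rw [Matrix.mulVecLin_apply] at hvv
    rw [Matrix.zero_apply]
    calc (toRat M * toRat L) i j
        = (fun k => toRat M i k) ⬝ᵥ (fun k => toRat L k j) := by rw [Matrix.mul_apply]; rfl
      _ = (fun k => toRat M i k) ⬝ᵥ ((toRat P).mulVec vv) := by rw [hvv]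
      _ = ((fun k => toRat M i k) ᵥ* (toRat P)) ⬝ᵥ vv := Matrix.dotProduct_mulVec _ _ _
      _ = ((toRat P)ᵀ.mulVec (fun k => toRat M i k)) ⬝ᵥ vv := by
          rw [Matrix.mulVec_transpose]
      _ = (0 : Fin n → RatFunc F) ⬝ᵥ vv := by rw [hrow]
      _ = 0 := zero_dotProduct _
  refine Matrix.ext fun i j => hinj ?_
  calc algebraMap F[X] (RatFunc F) ((M * L) i j)
      = ((M * L).map ⇑(algebraMap F[X] (RatFunc F))) i j := rfl
    _ = (toRat M * toRat L) i j := by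
        rw [show (M * L).map ⇑(algebraMap F[X] (RatFunc F)) = toRat M * toRat L from
          Matrix.map_mul]
    _ = 0 := by rw [h0, Matrix.zero_apply]
    _ = algebraMap F[X] (RatFunc F) ((0 : Matrix (Fin (m - r)) (Fin r) F[X]) i j) := by simp

lemma prod_zero_right {F : Type*} [Field F] {m n r : ℕ}
    (P : Matrix (Fin m) (Fin n) F[X]) (R : Matrix (Fin r) (Fin n) F[X])
    (N : Matrix (Fin n) (Fin (n - r)) F[X])
    (hRspan : rowSpace R = rowSpace P) (hNspan : colSpace N = rightNull P) :
    R * N = 0 := by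
  classical
  have hinj : Function.Injective ⇑(algebraMap F[X] (RatFunc F)) :=
    RatFunc.algebraMap_injective F
  have h0 : toRat R * toRat N = 0 := by
    refine Matrix.ext fun i j => ?_
    have hrowmem : (fun k => toRat R i k) ∈ rowSpace P := by
      rw [← hRspan]
      refine ⟨Pi.single i 1, ?_⟩
      rw [Matrix.mulVecLin_apply, Matrix.mulVec_single]
      funext k
      simp
    obtain ⟨w, hw⟩ := hrowmem
    rw [Matrix.mulVecLin_apply] at hw
    have hcolmem : (fun k => toRat N k j) ∈ rightNull P := by
      rw [← hNspan]
      refine ⟨Pi.single j 1, ?_⟩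
      rw [Matrix.mulVecLin_apply, Matrix.mulVec_single]
      funext k
      simp
    have hcol := LinearMap.mem_ker.mp hcolmem
    rw [Matrix.mulVecLin_apply] at hcol
    rw [Matrix.zero_apply]
    calc (toRat R * toRat N) i j
        = (fun k => toRat R i k) ⬝ᵥ (fun k => toRat N k j) := by rw [Matrix.mul_apply]; rfl
      _ = ((toRat P)ᵀ.mulVec w) ⬝ᵥ (fun k => toRat N k j) := by rw [hw]
      _ = (w ᵥ* (toRat P)) ⬝ᵥ (fun k => toRat N k j) := by rw [Matrix.mulVec_transpose]
      _ = w ⬝ᵥ ((toRat P).mulVec (fun k => toRat N k j)) :=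
          (Matrix.dotProduct_mulVec _ _ _).symm
      _ = w ⬝ᵥ (0 : Fin m → RatFunc F) := by rw [hcol]
      _ = 0 := dotProduct_zero _
  refine Matrix.ext fun i j => hinj ?_
  calc algebraMap F[X] (RatFunc F) ((R * N) i j)
      = ((R * N).map ⇑(algebraMap F[X] (RatFunc F))) i j := rfl
    _ = (toRat R * toRat N) i j := by
        rw [show (R * N).map ⇑(algebraMap F[X] (RatFunc F)) = toRat R * toRat N from
          Matrix.map_mul]
    _ = 0 := by rw [h0, Matrix.zero_apply]
    _ = algebraMap F[X] (RatFunc F) ((0 : Matrix (Fin r) (Fin (n - r)) F[X]) i j) := by simp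

end Main

/-- The sum of the minimal indices of the left nullspace of P equals the sum of the minimal
indices of the column space of P, and the sum of the minimal indices of the right nullspace
equals the sum of the minimal indices of the row space (Corollary on dual minimal bases). -/
theorem sum_minimal_indices_eq
    {F : Type*} [Field F] {m n r : ℕ}
    (P : Matrix (Fin m) (Fin n) F[X])
    (hrank : normalRank P = r) (hr0 : 0 < r) (hrm : r ≤ m) (hrn : r ≤ n)
    (M : Matrix (Fin (m - r)) (Fin m) F[X])
    (hM : IsMinimalRowBasis M) (hMspan : rowSpace M = leftNull P)
    (L : Matrix (Fin m) (Fin r) F[X])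
    (hL : IsMinimalColBasis L) (hLspan : colSpace L = colSpace P)
    (N : Matrix (Fin n) (Fin (n - r)) F[X])
    (hN : IsMinimalColBasis N) (hNspan : colSpace N = rightNull P)
    (R : Matrix (Fin r) (Fin n) F[X])
    (hR : IsMinimalRowBasis R) (hRspan : rowSpace R = rowSpace P) :
    (∑ i, rowDeg M i) = (∑ j, colDeg L j) ∧
    (∑ j, colDeg N j) = (∑ i, rowDeg R i) := by
  classical
  obtain ⟨hMx, hMrr⟩ := hM
  obtain ⟨hLx, hLrr⟩ := hL
  obtain ⟨hNx, hNrr⟩ := hN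
  obtain ⟨hRx, hRrr⟩ := hR
  have hML : M * L = 0 := prod_zero_left P M L hMspan hLspan
  have hRN : R * N = 0 := prod_zero_right P R N hRspan hNspan
  have hm1 : (m - r) + r = m := Nat.sub_add_cancel hrm
  have hn1 : (n - r) + r = n := Nat.sub_add_cancel hrn
  -- transpose bridges for L
  have hLrr' : (hrMatrix Lᵀ).rank = r := by
    rw [show hrMatrix Lᵀ = (hcMatrix L)ᵀ from rfl, Matrix.rank_transpose]
    exact hLrr
  have hLx' : ∀ x : AlgebraicClosure F, (evalMat Lᵀ x).rank = r := fun x => by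
    rw [show evalMat Lᵀ x = (evalMat L x)ᵀ from rfl, Matrix.rank_transpose]
    exact hLx x
  -- transpose bridges for N
  have hNrr' : (hrMatrix Nᵀ).rank = n - r := by
    rw [show hrMatrix Nᵀ = (hcMatrix N)ᵀ from rfl, Matrix.rank_transpose]
    exact hNrr
  have hNx' : ∀ x : AlgebraicClosure F, (evalMat Nᵀ x).rank = n - r := fun x => by
    rw [show evalMat Nᵀ x = (evalMat N x)ᵀ from rfl, Matrix.rank_transpose]
    exact hNx x
  have key1 : ∑ i, rowDegNat M i = ∑ k, rowDegNat Lᵀ k :=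
    lemA (finSumFinEquiv.trans (finCongr hm1)) M Lᵀ
      (by rw [Matrix.transpose_transpose]; exact hML) hMx hMrr hLx' hLrr'
  have key2 : ∑ j, rowDegNat Nᵀ j = ∑ i, rowDegNat R i :=
    lemA (finSumFinEquiv.trans (finCongr hn1)) Nᵀ R
      (by rw [← Matrix.transpose_mul, hRN, Matrix.transpose_zero]) hNx' hNrr' hRx hRrr
  constructor
  · have hMrow : ∀ i, rowDeg M i = (rowDegNat M i : WithBot ℕ) := fun i =>
      rowDeg_cast M i (row_nonzero M hMrr i)
    have hLcol : ∀ j, colDeg L j = (rowDegNat Lᵀ j : WithBot ℕ) := fun j =>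
      rowDeg_cast Lᵀ j (row_nonzero Lᵀ hLrr' j)
    calc ∑ i, rowDeg M i = ∑ i, ((rowDegNat M i : WithBot ℕ)) :=
          Finset.sum_congr rfl fun i _ => hMrow i
      _ = ((∑ i, rowDegNat M i : ℕ) : WithBot ℕ) := (Nat.cast_sum _ _).symm
      _ = ((∑ k, rowDegNat Lᵀ k : ℕ) : WithBot ℕ) := by rw [key1]
      _ = ∑ k, ((rowDegNat Lᵀ k : WithBot ℕ)) := Nat.cast_sum _ _
      _ = ∑ j, colDeg L j := Finset.sum_congr rfl fun j _ => (hLcol j).symm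
  · have hRrow : ∀ i, rowDeg R i = (rowDegNat R i : WithBot ℕ) := fun i =>
      rowDeg_cast R i (row_nonzero R hRrr i)
    have hNcol : ∀ j, colDeg N j = (rowDegNat Nᵀ j : WithBot ℕ) := fun j =>
      rowDeg_cast Nᵀ j (row_nonzero Nᵀ hNrr' j)
    calc ∑ j, colDeg N j = ∑ j, ((rowDegNat Nᵀ j : WithBot ℕ)) :=
          Finset.sum_congr rfl fun j _ => hNcol j
      _ = ((∑ j, rowDegNat Nᵀ j : ℕ) : WithBot ℕ) := (Nat.cast_sum _ _).symm
      _ = ((∑ i, rowDegNat R i : ℕ) : WithBot ℕ) := by rw [key2]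
      _ = ∑ i, ((rowDegNat R i : WithBot ℕ)) := Nat.cast_sum _ _
      _ = ∑ i, rowDeg R i := Finset.sum_congr rfl fun i _ => (hRrow i).symm
end
end

section
/- Let F be a field, P ∈ F[λ]^{m×n} with normal rank r > 0, and let P = L E R be a rank factorization of P. Let R_m ∈ F[λ]^{r×n} be a matrix whose rows form a minimal basis of Row(P) and let ρ_max be the largest row degree of R_m (i.e., the largest minimal index of Row(P)); let L_m ∈ F[λ]^{m×r} be a matrix whose columns form a minimal basis of Col(P) and let c_max be the largest column degree of L_m (i.e., the largest minimal index of Col(P)). Then deg(L) + deg(E) + deg(R) ≥ deg(L) + deg(R) ≥ ρ_max + c_max. Consequently, if ρ_max + c_max > deg(P), then no rank factorization of P, with three or two factors, satisfies that the sum of the degrees of the factors equals the degree of P. -/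
open Polynomial Matrix

noncomputable section

variable {F : Type*} [Field F]

section Aux

variable {K : Type*} [Field K]

lemma aux_mulVec_eq_zero {a b : ℕ} (M : Matrix (Fin a) (Fin b) K)
    (h : M.rank = b) {v : Fin b → K} (hv : M.mulVec v = 0) : v = 0 := by
  have h1 := LinearMap.finrank_range_add_finrank_ker M.mulVecLin
  rw [Module.finrank_pi, Fintype.card_fin] at h1
  have hr : Module.finrank K (LinearMap.range M.mulVecLin) = b := h
  have hk : Module.finrank K (LinearMap.ker M.mulVecLin) = 0 := by omega
  have : LinearMap.ker M.mulVecLin = ⊥ := Submodule.finrank_eq_zero.mp hk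
  have hvmem : v ∈ LinearMap.ker M.mulVecLin := by
    simpa [Matrix.mulVecLin] using hv
  rw [this] at hvmem
  simpa using hvmem

lemma aux_vecMul_eq_zero {a b : ℕ} (M : Matrix (Fin a) (Fin b) K)
    (h : M.rank = a) {w : Fin a → K} (hw : w ᵥ* M = 0) : w = 0 :=
  aux_mulVec_eq_zero Mᵀ (by rwa [Matrix.rank_transpose]) (by rwa [Matrix.mulVec_transpose])

lemma aux_coeff_mul {p q : K[X]} {d : ℕ} (hq : q.natDegree ≤ d) :
    (p * q).coeff (p.natDegree + d) = p.leadingCoeff * q.coeff d := by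
  rw [Polynomial.coeff_mul]
  rw [Finset.sum_eq_single (p.natDegree, d)]
  · rfl
  · rintro ⟨x, y⟩ hmem hne
    rw [Finset.HasAntidiagonal.mem_antidiagonal] at hmem
    rcases lt_trichotomy x p.natDegree with hx | hx | hx
    · have : d < y := by omega
      rw [Polynomial.coeff_eq_zero_of_natDegree_lt (lt_of_le_of_lt hq this), mul_zero]
    · exfalso; apply hne; simp [hx]; omega
    · rw [Polynomial.coeff_eq_zero_of_natDegree_lt hx, zero_mul]
  · intro hmem
    simp at hmem

end Aux
/-- Predictable degree property consequence: for a row reduced matrix, the degree of a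
polynomial combination of the rows is at least `deg (c j0) + rowDegNat j0` for any `j0`
with `c j0 ≠ 0`. -/
lemma aux_pdp {r n : ℕ} (Rm : Matrix (Fin r) (Fin n) F[X]) (hred : RowReduced Rm)
    (c : Fin r → F[X]) (j0 : Fin r) (hc : c j0 ≠ 0) :
    ∃ k, ((c j0).natDegree + rowDegNat Rm j0 : ℕ) ≤ (∑ j, c j * Rm j k).degree := by
  classical
  set s : Finset (Fin r) := Finset.univ.filter (fun j => c j ≠ 0) with hs
  have hj0s : j0 ∈ s := by simp [hs, hc]
  set N : ℕ := s.sup (fun j => (c j).natDegree + rowDegNat Rm j) with hN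
  have hN0 : (c j0).natDegree + rowDegNat Rm j0 ≤ N := by rw [hN]; exact Finset.le_sup (f := fun j => (c j).natDegree + rowDegNat Rm j) hj0s
  set w : Fin r → F := fun j =>
    if c j ≠ 0 ∧ (c j).natDegree + rowDegNat Rm j = N then (c j).leadingCoeff else 0 with hw
  have hwne : w ≠ 0 := by
    obtain ⟨j1, hj1s, hj1⟩ := Finset.exists_mem_eq_sup s ⟨j0, hj0s⟩
      (fun j => (c j).natDegree + rowDegNat Rm j)
    have hcj1 : c j1 ≠ 0 := by simpa [hs] using hj1s
    intro h0
    have := congrFun h0 j1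
    simp only [hw, Pi.zero_apply] at this
    rw [if_pos ⟨hcj1, hj1.symm⟩] at this
    exact hcj1 (Polynomial.leadingCoeff_eq_zero.mp this)
  have hvm : w ᵥ* hrMatrix Rm ≠ 0 := fun h => hwne (aux_vecMul_eq_zero _ hred h)
  obtain ⟨k, hk⟩ := Function.ne_iff.mp hvm
  refine ⟨k, ?_⟩
  have hcoeff : (∑ j, c j * Rm j k).coeff N = (w ᵥ* hrMatrix Rm) k := by
    rw [Polynomial.finset_sum_coeff]
    have : (w ᵥ* hrMatrix Rm) k = ∑ j, w j * hrMatrix Rm j k := by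
      simp [Matrix.vecMul, dotProduct]
    rw [this]
    refine Finset.sum_congr rfl fun j _ => ?_
    by_cases hcj : c j = 0
    · simp [hcj, hw]
    · have hdegRm : (Rm j k).natDegree ≤ rowDegNat Rm j := Finset.le_sup (f := fun k => (Rm j k).natDegree) (Finset.mem_univ k)
      by_cases heq : (c j).natDegree + rowDegNat Rm j = N
      · rw [← heq, aux_coeff_mul hdegRm]
        simp [hw, hcj, heq, hrMatrix]
      · have hlt : (c j).natDegree + rowDegNat Rm j < N :=
          lt_of_le_of_ne (by rw [hN]; exact Finset.le_sup (f := fun j => (c j).natDegree + rowDegNat Rm j) (by simp [hs, hcj])) heq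
        rw [Polynomial.coeff_eq_zero_of_natDegree_lt
          (lt_of_le_of_lt (le_trans (Polynomial.natDegree_mul_le)
            (add_le_add le_rfl hdegRm)) hlt)]
        simp [hw, hcj, heq]
  have : ((N : ℕ) : WithBot ℕ) ≤ (∑ j, c j * Rm j k).degree :=
    Polynomial.le_degree_of_ne_zero (by rw [hcoeff]; exact hk)
  exact le_trans (by exact_mod_cast hN0) this
/-- Descent: if `d * v` is a polynomial combination of the rows of a matrix that has full
row rank at every point of the algebraic closure, then so is `v`. -/
lemma aux_descent {r n : ℕ} (Rm : Matrix (Fin r) (Fin n) F[X])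
    (hfull : ∀ x : AlgebraicClosure F, (evalMat Rm x).rank = r) :
    ∀ N : ℕ, ∀ d : F[X], d ≠ 0 → d.natDegree ≤ N →
    ∀ c : Fin r → F[X], ∀ v : Fin n → F[X],
    (∀ k, ∑ j, c j * Rm j k = d * v k) → ∃ c' : Fin r → F[X], ∀ k, ∑ j, c' j * Rm j k = v k := by
  intro N
  induction N with
  | zero =>
    intro d hd0 hdeg c v hcv
    have hd : d = Polynomial.C (d.coeff 0) := Polynomial.eq_C_of_natDegree_eq_zero (by omega)
    have ha : d.coeff 0 ≠ 0 := fun h => hd0 (by rw [hd, h, map_zero])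
    refine ⟨fun j => Polynomial.C (d.coeff 0)⁻¹ * c j, fun k => ?_⟩
    simp only [mul_assoc]
    rw [← Finset.mul_sum, hcv k, ← mul_assoc]
    nth_rewrite 2 [hd]
    rw [← _root_.map_mul, inv_mul_cancel₀ ha, Polynomial.C_1, one_mul]
  | succ N ih =>
    intro d hd0 hdeg c v hcv
    by_cases hdu : d.natDegree = 0
    · have hd : d = Polynomial.C (d.coeff 0) := Polynomial.eq_C_of_natDegree_eq_zero hdu
      have ha : d.coeff 0 ≠ 0 := fun h => hd0 (by rw [hd, h, map_zero])
      refine ⟨fun j => Polynomial.C (d.coeff 0)⁻¹ * c j, fun k => ?_⟩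
      simp only [mul_assoc]
      rw [← Finset.mul_sum, hcv k, ← mul_assoc]
      nth_rewrite 2 [hd]
      rw [← _root_.map_mul, inv_mul_cancel₀ ha, Polynomial.C_1, one_mul]
    · have hnu : ¬ IsUnit d := fun h => hdu (Polynomial.natDegree_eq_zero_of_isUnit h)
      obtain ⟨p, hpirr, hpd⟩ := WfDvdMonoid.exists_irreducible_factor hnu hd0
      have hp0 : p ≠ 0 := hpirr.ne_zero
      have hpdeg : p.degree ≠ 0 := fun h => hpirr.not_isUnit
        (Polynomial.isUnit_iff_degree_eq_zero.mpr h)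
      obtain ⟨x, hx⟩ := IsAlgClosed.exists_aeval_eq_zero (AlgebraicClosure F) p hpdeg
      obtain ⟨e, he⟩ := hpd
      -- evaluate at x : the vector of evaluations of c is in the left kernel
      have hcx : ∀ j, Polynomial.aeval x (c j) = 0 := by
        have hker : (fun j => Polynomial.aeval x (c j)) ᵥ* evalMat Rm x = 0 := by
          funext k
          have h1 := congrArg (Polynomial.aeval x) (hcv k)
          simp only [map_sum, _root_.map_mul] at h1
          have hd0' : Polynomial.aeval x d = 0 := by
            rw [he, _root_.map_mul, hx, zero_mul]
          simp only [Matrix.vecMul, dotProduct, evalMat, Matrix.of_apply, Pi.zero_apply]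
          rw [h1, hd0', zero_mul]
        have := aux_vecMul_eq_zero (evalMat Rm x) (hfull x) hker
        intro j; exact congrFun this j
      -- p divides each c j
      have hint : IsIntegral F x := (IsAlgebraic.isIntegral ⟨p, hp0, hx⟩)
      have hminp : Associated (minpoly F x) p :=
        (minpoly.irreducible hint).associated_of_dvd hpirr (minpoly.dvd F x hx)
      have hpc : ∀ j, p ∣ c j := fun j =>
        hminp.symm.dvd.trans (minpoly.dvd F x (hcx j))
      -- divide everything by p
      choose c1 hc1 using hpc
      have he0 : e ≠ 0 := fun h => hd0 (by rw [he, h, mul_zero])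
      have hedeg : e.natDegree ≤ N := by
        have hpdeg1 : 1 ≤ p.natDegree := by
          rcases Nat.eq_zero_or_pos p.natDegree with h | h
          · exact absurd (by rw [Polynomial.degree_eq_natDegree hp0, h]; rfl) hpdeg
          · exact h
        rw [he, Polynomial.natDegree_mul hp0 he0] at hdeg
        omega
      have hcv1 : ∀ k, ∑ j, c1 j * Rm j k = e * v k := by
        intro k
        apply mul_left_cancel₀ hp0
        rw [Finset.mul_sum]
        calc ∑ j, p * (c1 j * Rm j k) = ∑ j, c j * Rm j k := by
              refine Finset.sum_congr rfl fun j _ => ?_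
              rw [← mul_assoc, ← hc1 j]
          _ = p * (e * v k) := by rw [hcv k, he, mul_assoc]
      exact ih e he0 hedeg c1 v hcv1
/-- Minimal bases "contain" polynomially every polynomial vector of their rational row space. -/
lemma aux_poly_comb {r n : ℕ} (Rm : Matrix (Fin r) (Fin n) F[X])
    (hfull : ∀ x : AlgebraicClosure F, (evalMat Rm x).rank = r)
    (v : Fin n → F[X])
    (hv : (fun k => algebraMap F[X] (RatFunc F) (v k)) ∈ rowSpace Rm) :
    ∃ c : Fin r → F[X], ∀ k, ∑ j, c j * Rm j k = v k := by
  classical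
  obtain ⟨w, hw⟩ := hv
  -- clear denominators
  obtain ⟨b, hb⟩ := IsLocalization.exist_integer_multiples (nonZeroDivisors F[X])
    Finset.univ w
  have hbint : ∀ j, ∃ cj : F[X], algebraMap F[X] (RatFunc F) cj = (b : F[X]) • w j := by
    intro j
    exact hb j (Finset.mem_univ j)
  choose c hc using hbint
  have hb0 : (b : F[X]) ≠ 0 := nonZeroDivisors.coe_ne_zero b
  have key : ∀ k, ∑ j, c j * Rm j k = (b : F[X]) * v k := by
    intro k
    apply IsFractionRing.injective F[X] (RatFunc F)
    have hwk : ∑ j, w j * algebraMap F[X] (RatFunc F) (Rm j k)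
        = algebraMap F[X] (RatFunc F) (v k) := by
      have := congrFun hw k
      simpa [Matrix.mulVecLin, Matrix.mulVec, Matrix.vecMul, dotProduct, toRat, mul_comm] using this
    rw [map_sum, _root_.map_mul]
    calc ∑ j, algebraMap F[X] (RatFunc F) (c j * Rm j k)
        = ∑ j, ((b : F[X]) • w j) * algebraMap F[X] (RatFunc F) (Rm j k) := by
          refine Finset.sum_congr rfl fun j _ => ?_
          rw [_root_.map_mul, hc j]
      _ = algebraMap F[X] (RatFunc F) (b : F[X]) * ∑ j, w j * algebraMap F[X] (RatFunc F) (Rm j k) := by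
          rw [Finset.mul_sum]
          refine Finset.sum_congr rfl fun j _ => ?_
          rw [Algebra.smul_def, mul_assoc]
      _ = algebraMap F[X] (RatFunc F) (b : F[X]) * algebraMap F[X] (RatFunc F) (v k) := by
          rw [hwk]
  exact aux_descent Rm hfull (b : F[X]).natDegree (b : F[X]) hb0 le_rfl c v key
lemma toRat_mul {m n p : ℕ} (A : Matrix (Fin m) (Fin n) F[X]) (B : Matrix (Fin n) (Fin p) F[X]) :
    toRat (A * B) = toRat A * toRat B := by
  unfold toRat
  exact Matrix.map_mul

lemma toRat_transpose {m n : ℕ} (A : Matrix (Fin m) (Fin n) F[X]) :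
    toRat Aᵀ = (toRat A)ᵀ := rfl

lemma finrank_rowSpace {m n : ℕ} (A : Matrix (Fin m) (Fin n) F[X]) :
    Module.finrank (RatFunc F) (rowSpace A) = (toRat A).rank := by
  rw [rowSpace, ← Matrix.rank_transpose (toRat A)]
  rfl

/-- Key lemma: if `Q = A * R` has normal rank `r` (with `R` having `r` rows) and `Rm` is a
minimal row basis of the row space of `Q`, then `matDeg Rm ≤ matDeg R`. -/
lemma aux_key_row {m' r n : ℕ} (hr0 : 0 < r)
    (A : Matrix (Fin m') (Fin r) F[X]) (R : Matrix (Fin r) (Fin n) F[X])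
    (hrank : (toRat (A * R)).rank = r)
    (Rm : Matrix (Fin r) (Fin n) F[X]) (hRm : IsMinimalRowBasis Rm)
    (hspan : rowSpace Rm = rowSpace (A * R)) :
    matDeg Rm ≤ matDeg R := by
  classical
  have hmul : toRat (A * R) = toRat A * toRat R := toRat_mul A R
  have hrR : (toRat R).rank = r := by
    refine le_antisymm (Matrix.rank_le_height _) ?_
    have h := Matrix.rank_mul_le_right (toRat A) (toRat R)
    rw [← hmul, hrank] at h
    exact h
  -- rowSpace (A * R) ≤ rowSpace R
  have hle : rowSpace (A * R) ≤ rowSpace R := by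
    rw [rowSpace, rowSpace, hmul, Matrix.transpose_mul, Matrix.mulVecLin_mul]
    exact LinearMap.range_comp_le_range _ _
  have heq : rowSpace (A * R) = rowSpace R := by
    refine Submodule.eq_of_le_of_finrank_le hle ?_
    rw [finrank_rowSpace, finrank_rowSpace, hrR, hrank]
  -- every row of R is in rowSpace Rm
  have hrow : ∀ i : Fin r, (fun k => algebraMap F[X] (RatFunc F) (R i k)) ∈ rowSpace Rm := by
    intro i
    rw [hspan, heq]
    refine ⟨Pi.single i 1, ?_⟩
    show (toRat R)ᵀ.mulVec (Pi.single i 1) = _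
    rw [Matrix.mulVec_single]
    funext k
    simp [toRat]
  choose Crow hCrow using fun i => aux_poly_comb Rm hRm.1 (fun k => R i k) (hrow i)
  set C : Matrix (Fin r) (Fin r) F[X] := Matrix.of (fun i j => Crow i j) with hC
  have hCR : R = C * Rm := by
    refine Matrix.ext fun i k => ?_
    rw [Matrix.mul_apply]
    exact (hCrow i k).symm
  have hrC : (toRat C).rank = r := by
    refine le_antisymm (Matrix.rank_le_height _) ?_
    have h := Matrix.rank_mul_le_left (toRat C) (toRat Rm)
    rw [← toRat_mul, ← hCR, hrR] at h
    exact h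
  -- j* maximizing rowDegNat Rm
  obtain ⟨jm, _, hjm⟩ := Finset.exists_mem_eq_sup (Finset.univ : Finset (Fin r))
    (Finset.univ_nonempty_iff.mpr (Fin.pos_iff_nonempty.mp hr0)) (rowDegNat Rm)
  -- the jm-th column of C is nonzero
  have hcol : ∃ i, C i jm ≠ 0 := by
    by_contra hcontra
    push_neg at hcontra
    have h0 : (toRat C).mulVec (Pi.single jm 1) = 0 := by
      rw [Matrix.mulVec_single]
      funext i
      simp [toRat, hcontra i]
    have := aux_mulVec_eq_zero (toRat C) hrC h0
    have h1 := congrFun this jm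
    simp at h1
  obtain ⟨i, hi⟩ := hcol
  obtain ⟨k, hk⟩ := aux_pdp Rm hRm.2 (fun j => C i j) jm hi
  have hRik : ∑ j, C i j * Rm j k = R i k := (hCrow i k)
  rw [hRik] at hk
  have h2 : matDeg Rm ≤ ((rowDegNat Rm jm : ℕ) : WithBot ℕ) := by
    rw [matDeg]
    refine Finset.sup_le fun i' _ => Finset.sup_le fun k' _ => ?_
    calc (Rm i' k').degree ≤ ((Rm i' k').natDegree : WithBot ℕ) := Polynomial.degree_le_natDegree
      _ ≤ ((rowDegNat Rm i' : ℕ) : WithBot ℕ) := by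
          have h5 : (Rm i' k').natDegree ≤ rowDegNat Rm i' :=
            Finset.le_sup (f := fun k => (Rm i' k).natDegree) (Finset.mem_univ k')
          exact_mod_cast h5
      _ ≤ ((rowDegNat Rm jm : ℕ) : WithBot ℕ) := by
          have h6 : rowDegNat Rm i' ≤ rowDegNat Rm jm := by
            rw [← hjm]; exact Finset.le_sup (Finset.mem_univ i')
          exact_mod_cast h6
  have h3 : ((rowDegNat Rm jm : ℕ) : WithBot ℕ) ≤ (R i k).degree := by
    refine le_trans ?_ hk
    exact_mod_cast Nat.cast_le.mpr (Nat.le_add_left _ _)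
  have h4 : (R i k).degree ≤ matDeg R := by
    rw [matDeg]
    exact le_trans (Finset.le_sup (f := fun k' => (R i k').degree) (Finset.mem_univ k))
      (Finset.le_sup (f := fun i'' => Finset.univ.sup fun k' => (R i'' k').degree)
        (Finset.mem_univ i))
  exact le_trans h2 (le_trans h3 h4)
lemma matDeg_transpose {m n : ℕ} (A : Matrix (Fin m) (Fin n) F[X]) :
    matDeg Aᵀ = matDeg A := by
  rw [matDeg, matDeg]
  exact Finset.sup_comm _ _ _

lemma rowSpace_transpose {m n : ℕ} (A : Matrix (Fin m) (Fin n) F[X]) :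
    rowSpace Aᵀ = colSpace A := by
  rw [rowSpace, toRat_transpose, Matrix.transpose_transpose, colSpace]

lemma hrMatrix_transpose {m n : ℕ} (A : Matrix (Fin m) (Fin n) F[X]) :
    hrMatrix Aᵀ = (hcMatrix A)ᵀ :=
  Matrix.ext fun _ _ => rfl

lemma evalMat_transpose {m n : ℕ} (A : Matrix (Fin m) (Fin n) F[X]) (x : AlgebraicClosure F) :
    evalMat Aᵀ x = (evalMat A x)ᵀ :=
  Matrix.ext fun _ _ => rfl

lemma isMinimalRowBasis_transpose {m n : ℕ} (A : Matrix (Fin m) (Fin n) F[X])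
    (h : IsMinimalColBasis A) : IsMinimalRowBasis Aᵀ := by
  obtain ⟨h1, h2⟩ := h
  constructor
  · intro x
    rw [evalMat_transpose, Matrix.rank_transpose]
    exact h1 x
  · rw [RowReduced, hrMatrix_transpose, Matrix.rank_transpose]
    exact h2
/-- Lower bound for the sum of the degrees of the factors of any rank factorization of P
in terms of the largest minimal indices of Row(P) and Col(P), and its consequence. -/
theorem rank_factorization_degree_lower_bound
    {F : Type*} [Field F] {m n r : ℕ}
    (P : Matrix (Fin m) (Fin n) F[X])
    (hrank : normalRank P = r) (hr0 : 0 < r)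
    (Rm : Matrix (Fin r) (Fin n) F[X])
    (hRm : IsMinimalRowBasis Rm) (hRmspan : rowSpace Rm = rowSpace P)
    (Lm : Matrix (Fin m) (Fin r) F[X])
    (hLm : IsMinimalColBasis Lm) (hLmspan : colSpace Lm = colSpace P) :
    (∀ (L : Matrix (Fin m) (Fin r) F[X]) (E : Matrix (Fin r) (Fin r) F[X])
        (R : Matrix (Fin r) (Fin n) F[X]), P = L * E * R →
        matDeg L + matDeg E + matDeg R ≥ matDeg L + matDeg R ∧
        matDeg L + matDeg R ≥ matDeg Rm + matDeg Lm) ∧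
    (matDeg Rm + matDeg Lm > matDeg P →
      (∀ (L : Matrix (Fin m) (Fin r) F[X]) (E : Matrix (Fin r) (Fin r) F[X])
          (R : Matrix (Fin r) (Fin n) F[X]), P = L * E * R →
          matDeg L + matDeg E + matDeg R ≠ matDeg P) ∧
      (∀ (L : Matrix (Fin m) (Fin r) F[X]) (R : Matrix (Fin r) (Fin n) F[X]),
          P = L * R → matDeg L + matDeg R ≠ matDeg P)) := by
   classical
  have hrank' : (toRat P).rank = r := hrank
  have main : ∀ (L : Matrix (Fin m) (Fin r) F[X]) (E : Matrix (Fin r) (Fin r) F[X])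
      (R : Matrix (Fin r) (Fin n) F[X]), P = L * E * R →
      matDeg Rm + matDeg Lm ≤ matDeg L + matDeg R := by
    intro L E R hP
    have hdR : matDeg Rm ≤ matDeg R := by
      refine aux_key_row hr0 (L * E) R ?_ Rm hRm ?_
      · rw [← hP]; exact hrank'
      · rw [hRmspan, hP]
    have hdL : matDeg Lm ≤ matDeg L := by
      have htr : (E * R)ᵀ * Lᵀ = Pᵀ := by
        rw [← Matrix.transpose_mul, ← Matrix.mul_assoc, hP]
      have hrk : (toRat ((E * R)ᵀ * Lᵀ)).rank = r := by
        rw [htr, toRat_transpose, Matrix.rank_transpose]; exact hrank'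
      have hsp : rowSpace Lmᵀ = rowSpace ((E * R)ᵀ * Lᵀ) := by
        rw [rowSpace_transpose, hLmspan, htr, rowSpace_transpose]
      have h := aux_key_row hr0 ((E * R)ᵀ) (Lᵀ) hrk (Lmᵀ)
        (isMinimalRowBasis_transpose Lm hLm) hsp
      rw [matDeg_transpose, matDeg_transpose] at h
      exact h
    calc matDeg Rm + matDeg Lm ≤ matDeg R + matDeg L := add_le_add hdR hdL
      _ = matDeg L + matDeg R := add_comm _ _
  have mainE : ∀ (L : Matrix (Fin m) (Fin r) F[X]) (E : Matrix (Fin r) (Fin r) F[X])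
      (R : Matrix (Fin r) (Fin n) F[X]), P = L * E * R →
      matDeg L + matDeg R ≤ matDeg L + matDeg E + matDeg R := by
    intro L E R hP
    have hE0 : E ≠ 0 := by
      intro h0
      have h1 : (toRat P).rank ≤ (toRat E).rank := by
        rw [hP, toRat_mul, toRat_mul]
        exact le_trans (Matrix.rank_mul_le_left _ _) (Matrix.rank_mul_le_right _ _)
      rw [hrank'] at h1
      have : toRat E = 0 := by
        rw [h0]; unfold toRat; exact Matrix.map_zero _ (map_zero _)
      rw [this, Matrix.rank_zero] at h1
      omega
    have hEdeg : (0 : WithBot ℕ) ≤ matDeg E := by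
      have : ∃ i j, E i j ≠ 0 := by
        by_contra hc
        push_neg at hc
        exact hE0 (Matrix.ext fun i j => hc i j)
      obtain ⟨i, j, hij⟩ := this
      calc (0 : WithBot ℕ) ≤ (E i j).degree := Polynomial.zero_le_degree_iff.mpr hij
        _ ≤ matDeg E := le_trans
            (Finset.le_sup (f := fun j' => (E i j').degree) (Finset.mem_univ j))
            (Finset.le_sup (f := fun i' => Finset.univ.sup fun j' => (E i' j').degree)
              (Finset.mem_univ i))
    calc matDeg L + matDeg R = matDeg L + 0 + matDeg R := by rw [add_zero]
      _ ≤ matDeg L + matDeg E + matDeg R :=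
          add_le_add_left (add_le_add_right hEdeg _) _
  refine ⟨fun L E R hP => ⟨mainE L E R hP, main L E R hP⟩, fun hgt => ⟨?_, ?_⟩⟩
  · intro L E R hP heq
    have h1 : matDeg Rm + matDeg Lm ≤ matDeg P := by
      rw [← heq]
      exact le_trans (main L E R hP) (mainE L E R hP)
    exact absurd h1 (not_le.mpr hgt)
  · intro L R hP heq
    have hP' : P = L * (1 : Matrix (Fin r) (Fin r) F[X]) * R := by rw [Matrix.mul_one]; exact hP
    have h1 : matDeg Rm + matDeg Lm ≤ matDeg P := by
      rw [← heq]
      exact main L 1 R hP'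
    exact absurd h1 (not_le.mpr hgt)
end
end

section
/- (Predictable-degree property for products of two polynomial matrices.) Let F be a field and P = L R, where L ∈ F[λ]^{m×r} and R ∈ F[λ]^{r×n}. If L is column reduced or R is row reduced, then deg(P) = max_{1 ≤ i ≤ r} ( deg(L_{*i}) + deg(R_{i*}) ), with the convention that the degree of a zero column or row is −∞ and −∞ is absorbing under addition. -/
open Polynomial Matrix

noncomputable section

variable {F : Type*} [Field F]

lemma aux_rank_inj {p q : ℕ} (A : Matrix (Fin p) (Fin q) F) (h : A.rank = q) :
    Function.Injective A.mulVec := by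
  have hk := LinearMap.finrank_range_add_finrank_ker A.mulVecLin
  rw [Matrix.rank] at h
  rw [h, Module.finrank_pi] at hk
  simp at hk
  have := LinearMap.ker_eq_bot.mp hk
  intro x y hxy
  exact this hxy

lemma colDeg_attained {m n : ℕ} (P : Matrix (Fin m) (Fin n) F[X]) {j : Fin n} {c : ℕ}
    (h : colDeg P j = (c : WithBot ℕ)) :
    colDegNat P j = c ∧ ∃ i, (hcMatrix P) i j ≠ 0 := by
  have hm : (Finset.univ : Finset (Fin m)).Nonempty := by
    rcases Finset.eq_empty_or_nonempty (Finset.univ : Finset (Fin m)) with he | hne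
    · rw [colDeg, he, Finset.sup_empty] at h; exact absurd h (by simp)
    · exact hne
  obtain ⟨i, _, hi⟩ := Finset.exists_mem_eq_sup Finset.univ hm (fun i => (P i j).degree)
  rw [colDeg] at h
  have hdeg : (P i j).degree = (c : WithBot ℕ) := by rw [← hi, h]
  have hnat : colDegNat P j = c := by
    apply le_antisymm
    · refine Finset.sup_le fun i' _ => ?_
      exact natDegree_le_of_degree_le
        (le_trans (Finset.le_sup (f := fun i'' => (P i'' j).degree) (Finset.mem_univ i')) h.le)
    · calc c = (P i j).natDegree := (natDegree_eq_of_degree_eq_some hdeg).symm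
        _ ≤ _ := Finset.le_sup (f := fun i'' => (P i'' j).natDegree) (Finset.mem_univ i)
  refine ⟨hnat, ⟨i, ?_⟩⟩
  simp only [hcMatrix, Matrix.of_apply, hnat]
  exact coeff_ne_zero_of_eq_degree hdeg

lemma rowDeg_attained {m n : ℕ} (P : Matrix (Fin m) (Fin n) F[X]) {i : Fin m} {c : ℕ}
    (h : rowDeg P i = (c : WithBot ℕ)) :
    rowDegNat P i = c ∧ ∃ j, (hrMatrix P) i j ≠ 0 := by
  have hm : (Finset.univ : Finset (Fin n)).Nonempty := by
    rcases Finset.eq_empty_or_nonempty (Finset.univ : Finset (Fin n)) with he | hne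
    · rw [rowDeg, he, Finset.sup_empty] at h; exact absurd h (by simp)
    · exact hne
  obtain ⟨j, _, hj⟩ := Finset.exists_mem_eq_sup Finset.univ hm (fun j => (P i j).degree)
  rw [rowDeg] at h
  have hdeg : (P i j).degree = (c : WithBot ℕ) := by rw [← hj, h]
  have hnat : rowDegNat P i = c := by
    apply le_antisymm
    · refine Finset.sup_le fun j' _ => ?_
      exact natDegree_le_of_degree_le
        (le_trans (Finset.le_sup (f := fun j'' => (P i j'').degree) (Finset.mem_univ j')) h.le)
    · calc c = (P i j).natDegree := (natDegree_eq_of_degree_eq_some hdeg).symm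
        _ ≤ _ := Finset.le_sup (f := fun j'' => (P i j'').natDegree) (Finset.mem_univ j)
  refine ⟨hnat, ⟨j, ?_⟩⟩
  simp only [hrMatrix, Matrix.of_apply, hnat]
  exact coeff_ne_zero_of_eq_degree hdeg

/-- Predictable-degree property for a product of two polynomial matrices: if L is column
reduced or R is row reduced, then deg(L R) = max over i of (deg L_{*i} + deg R_{i*}). -/
theorem predictable_degree_two_factors
    {F : Type*} [Field F] {m r n : ℕ}
    (L : Matrix (Fin m) (Fin r) F[X]) (R : Matrix (Fin r) (Fin n) F[X])
    (h : ColReduced L ∨ RowReduced R) :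
    matDeg (L * R) = Finset.univ.sup (fun i : Fin r => colDeg L i + rowDeg R i) := by
  classical
  set d := Finset.univ.sup (fun i : Fin r => colDeg L i + rowDeg R i) with hd
  have hub : matDeg (L * R) ≤ d := by
    simp only [matDeg]
    refine Finset.sup_le fun j _ => Finset.sup_le fun k _ => ?_
    rw [Matrix.mul_apply]
    refine le_trans (Polynomial.degree_sum_le _ _) (Finset.sup_le fun i _ => ?_)
    refine le_trans (Polynomial.degree_mul_le _ _) ?_
    refine le_trans (add_le_add
      (Finset.le_sup (f := fun i' => (L i' i).degree) (Finset.mem_univ j))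
      (Finset.le_sup (f := fun k' => (R i k').degree) (Finset.mem_univ k))) ?_
    rw [hd]
    exact Finset.le_sup (f := fun i => colDeg L i + rowDeg R i) (Finset.mem_univ i)
  refine le_antisymm hub ?_
  rcases eq_or_ne d ⊥ with hbot | hbot
  · rw [hbot]; exact bot_le
  obtain ⟨dd, hdd⟩ := WithBot.ne_bot_iff_exists.mp hbot
  set S : Finset (Fin r) :=
    Finset.univ.filter (fun i => colDeg L i + rowDeg R i = (dd : WithBot ℕ)) with hS
  have hSfacts : ∀ i ∈ S, ∃ c e : ℕ, colDeg L i = (c : WithBot ℕ) ∧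
      rowDeg R i = (e : WithBot ℕ) ∧ c + e = dd := by
    intro i hi
    rw [hS, Finset.mem_filter] at hi
    have hsum := hi.2
    have hL : colDeg L i ≠ ⊥ := by intro hb; rw [hb] at hsum; simp at hsum
    have hR : rowDeg R i ≠ ⊥ := by intro hb; rw [hb] at hsum; simp at hsum
    obtain ⟨c, hc⟩ := WithBot.ne_bot_iff_exists.mp hL
    obtain ⟨e, he⟩ := WithBot.ne_bot_iff_exists.mp hR
    refine ⟨c, e, hc.symm, he.symm, ?_⟩
    rw [← hc, ← he, ← WithBot.coe_add] at hsum
    exact WithBot.coe_inj.mp hsum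
  have key : ∀ j k, ((L * R) j k).coeff dd = ∑ i ∈ S, hcMatrix L j i * hrMatrix R i k := by
    intro j k
    rw [Matrix.mul_apply, Polynomial.finset_sum_coeff]
    rw [← Finset.sum_subset (Finset.subset_univ S) (fun i _ hni => ?_)]
    · refine Finset.sum_congr rfl fun i hi => ?_
      obtain ⟨c, e, hc, he, hce⟩ := hSfacts i hi
      have h1 : (L j i).natDegree ≤ c := natDegree_le_of_degree_le
        (le_trans (Finset.le_sup (f := fun i' => (L i' i).degree) (Finset.mem_univ j)) hc.le)
      have h2 : (R i k).natDegree ≤ e := natDegree_le_of_degree_le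
        (le_trans (Finset.le_sup (f := fun k' => (R i k').degree) (Finset.mem_univ k)) he.le)
      rw [← hce, Polynomial.coeff_mul_add_eq_of_natDegree_le h1 h2]
      simp only [hcMatrix, hrMatrix, Matrix.of_apply, (colDeg_attained L hc).1,
        (rowDeg_attained R he).1]
    · apply Polynomial.coeff_eq_zero_of_degree_lt
      have hle : (L j i * R i k).degree ≤ colDeg L i + rowDeg R i :=
        le_trans (Polynomial.degree_mul_le _ _) (add_le_add
          (Finset.le_sup (f := fun i' => (L i' i).degree) (Finset.mem_univ j))
          (Finset.le_sup (f := fun k' => (R i k').degree) (Finset.mem_univ k)))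
      have hup : colDeg L i + rowDeg R i ≤ (dd : WithBot ℕ) :=
        le_of_le_of_eq (hd ▸ Finset.le_sup (f := fun i => colDeg L i + rowDeg R i)
          (Finset.mem_univ i)) hdd.symm
      have hne : colDeg L i + rowDeg R i ≠ (dd : WithBot ℕ) := by
        intro heq; exact hni (by rw [hS, Finset.mem_filter]; exact ⟨Finset.mem_univ _, heq⟩)
      exact lt_of_le_of_lt hle (lt_of_le_of_ne hup hne)
  have hrne : (Finset.univ : Finset (Fin r)).Nonempty := by
    rcases Finset.eq_empty_or_nonempty (Finset.univ : Finset (Fin r)) with he | hne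
    · exfalso; apply hbot; rw [hd, he, Finset.sup_empty]
    · exact hne
  obtain ⟨i0, _, hi0⟩ := Finset.exists_mem_eq_sup Finset.univ hrne
    (fun i => colDeg L i + rowDeg R i)
  have hi0S : i0 ∈ S := by
    rw [hS, Finset.mem_filter]
    exact ⟨Finset.mem_univ _, hi0.symm.trans (hd.symm.trans hdd.symm)⟩
  have hex : ∃ j k, ∑ i ∈ S, hcMatrix L j i * hrMatrix R i k ≠ 0 := by
    by_contra hall
    push_neg at hall
    obtain ⟨c0, e0, hc0, he0, _⟩ := hSfacts i0 hi0S
    rcases h with hCL | hRR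
    · obtain ⟨k, hk⟩ := (rowDeg_attained R he0).2
      have hinj := aux_rank_inj _ hCL
      set v : Fin r → F := fun i => if i ∈ S then hrMatrix R i k else 0 with hv
      have hmv : (hcMatrix L).mulVec v = (hcMatrix L).mulVec 0 := by
        funext j
        simp only [Matrix.mulVec_zero, Pi.zero_apply]
        simp only [Matrix.mulVec, dotProduct, hv, mul_ite, mul_zero]
        rw [Finset.sum_ite_mem, Finset.univ_inter]
        exact hall j k
      have hv0 := congrFun (hinj hmv) i0
      simp only [hv, hi0S, if_true, Pi.zero_apply] at hv0
      exact hk hv0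
    · obtain ⟨j, hj⟩ := (colDeg_attained L hc0).2
      have hrank : (hrMatrix R)ᵀ.rank = r := by rw [Matrix.rank_transpose]; exact hRR
      have hinj := aux_rank_inj _ hrank
      set w : Fin r → F := fun i => if i ∈ S then hcMatrix L j i else 0 with hw
      have hmv : (hrMatrix R)ᵀ.mulVec w = (hrMatrix R)ᵀ.mulVec 0 := by
        funext k
        simp only [Matrix.mulVec_zero, Pi.zero_apply]
        simp only [Matrix.mulVec, dotProduct, hw, Matrix.transpose_apply, mul_ite, mul_zero]
        rw [Finset.sum_ite_mem, Finset.univ_inter]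
        rw [← hall j k]
        exact Finset.sum_congr rfl fun i _ => mul_comm _ _
      have hw0 := congrFun (hinj hmv) i0
      simp only [hw, hi0S, if_true, Pi.zero_apply] at hw0
      exact hj hw0
  obtain ⟨j, k, hjk⟩ := hex
  have hdeg : (dd : WithBot ℕ) ≤ ((L * R) j k).degree :=
    Polynomial.le_degree_of_ne_zero (by rw [key]; exact hjk)
  rw [← hdd]
  refine le_trans hdeg ?_
  simp only [matDeg]
  exact le_trans (Finset.le_sup (f := fun k' => ((L * R) j k').degree) (Finset.mem_univ k))
    (Finset.le_sup (f := fun j' => Finset.univ.sup fun k' => ((L * R) j' k').degree)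
      (Finset.mem_univ j))
end
end

section
/- (Predictable-degree property for products of three polynomial matrices.) Let F be a field and P = L E R, where L ∈ F[λ]^{m×r}, E ∈ F[λ]^{r×s} with entries e_{ij}, and R ∈ F[λ]^{s×n}. If L is column reduced and R is row reduced, then deg(P) = max_{1 ≤ i ≤ r, 1 ≤ j ≤ s} ( deg(L_{*i}) + deg(e_{ij}) + deg(R_{j*}) ), with the convention that the degree of the zero polynomial is −∞ and −∞ is absorbing under addition. -/
open Polynomial Matrix

noncomputable section

variable {F : Type*} [Field F]

theorem coeff_mul_le_deg' {F : Type*} [Field F] (p q : F[X]) (a b : ℕ)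
    (hp : p.degree ≤ a) (hq : q.degree ≤ b) :
    (p * q).coeff (a + b) = p.coeff a * q.coeff b := by
  rcases lt_or_eq_of_le hp with h | h
  · rw [Polynomial.coeff_eq_zero_of_degree_lt h, zero_mul,
      Polynomial.coeff_eq_zero_of_degree_lt]
    calc (p*q).degree ≤ p.degree + q.degree := Polynomial.degree_mul_le p q
    _ < (a : WithBot ℕ) + b := by
      rcases eq_or_ne q 0 with hq0 | hq0
      · simp [hq0]
      · exact WithBot.add_lt_add_of_lt_of_le (by simpa using hq0) h hq
    _ = ((a + b : ℕ) : WithBot ℕ) := by push_cast; ring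
  · rcases lt_or_eq_of_le hq with h' | h'
    · rw [Polynomial.coeff_eq_zero_of_degree_lt h', mul_zero,
        Polynomial.coeff_eq_zero_of_degree_lt]
      calc (p*q).degree ≤ p.degree + q.degree := Polynomial.degree_mul_le p q
      _ < (a : WithBot ℕ) + b := WithBot.add_lt_add_of_le_of_lt (by rw [h]; simp) hp h'
      _ = ((a + b : ℕ) : WithBot ℕ) := by push_cast; ring
    · have ha : p.natDegree = a := Polynomial.natDegree_eq_of_degree_eq_some h
      have hb : q.natDegree = b := Polynomial.natDegree_eq_of_degree_eq_some h'
      rw [← ha, ← hb, Polynomial.coeff_mul_degree_add_degree, ha, hb,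
        Polynomial.leadingCoeff, Polynomial.leadingCoeff, ha, hb]

theorem mulVec_inj_of_rank' {F : Type*} [Field F] {m r : ℕ} (A : Matrix (Fin m) (Fin r) F)
    (h : A.rank = r) : Function.Injective A.mulVec := by
  have h1 : LinearMap.ker A.mulVecLin = ⊥ := by
    have h2 := LinearMap.finrank_range_add_finrank_ker A.mulVecLin
    rw [Module.finrank_pi, Fintype.card_fin] at h2
    rw [Matrix.rank] at h
    exact Submodule.finrank_eq_zero.mp (by omega)
  exact LinearMap.ker_eq_bot.mp h1

theorem sup_natDegree_eq' {F : Type*} [Field F] {ι : Type*} (t : Finset ι) (f : ι → F[X]) (a : ℕ)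
    (h : t.sup (fun i => (f i).degree) = (a : WithBot ℕ)) :
    t.sup (fun i => (f i).natDegree) = a := by
  have hne : t.Nonempty := by
    rcases t.eq_empty_or_nonempty with he | hne
    · rw [he, Finset.sup_empty] at h; exact absurd h (by simp)
    · exact hne
  obtain ⟨i0, hi0, h0⟩ := Finset.exists_mem_eq_sup t hne (fun i => (f i).degree)
  rw [h] at h0
  apply le_antisymm
  · refine Finset.sup_le fun i hi => Polynomial.natDegree_le_iff_degree_le.mpr ?_
    exact h ▸ Finset.le_sup (f := fun i => (f i).degree) hi
  · calc a = (f i0).natDegree := (Polynomial.natDegree_eq_of_degree_eq_some h0.symm).symm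
    _ ≤ _ := Finset.le_sup (f := fun i => (f i).natDegree) hi0

/-- Predictable-degree property for a product of three polynomial matrices: if L is column
reduced and R is row reduced, then
deg(L E R) = max over i, j of (deg L_{*i} + deg e_{ij} + deg R_{j*}). -/
theorem predictable_degree_three_factors
    {F : Type*} [Field F] {m r s n : ℕ}
    (L : Matrix (Fin m) (Fin r) F[X]) (E : Matrix (Fin r) (Fin s) F[X])
    (R : Matrix (Fin s) (Fin n) F[X])
    (hL : ColReduced L) (hR : RowReduced R) :
    matDeg (L * E * R) =
      Finset.univ.sup (fun i : Fin r =>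
        Finset.univ.sup (fun j : Fin s => colDeg L i + (E i j).degree + rowDeg R j)) := by
  set D := Finset.univ.sup (fun i : Fin r =>
      Finset.univ.sup (fun j : Fin s => colDeg L i + (E i j).degree + rowDeg R j)) with hDdef
  have entry : ∀ k l, (L * E * R) k l = ∑ j, ∑ i, L k i * E i j * R j l := by
    intro k l
    simp only [Matrix.mul_apply, Finset.sum_mul]
  have termdeg : ∀ (k : Fin m) (l : Fin n) (i : Fin r) (j : Fin s),
      (L k i * E i j * R j l).degree ≤ colDeg L i + (E i j).degree + rowDeg R j := by
    intro k l i j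
    calc (L k i * E i j * R j l).degree ≤ (L k i * E i j).degree + (R j l).degree :=
          Polynomial.degree_mul_le _ _
      _ ≤ (L k i).degree + (E i j).degree + (R j l).degree :=
          add_le_add (Polynomial.degree_mul_le _ _) le_rfl
      _ ≤ colDeg L i + (E i j).degree + rowDeg R j := by
          refine add_le_add (add_le_add ?_ le_rfl) ?_
          · exact Finset.le_sup (f := fun k => (L k i).degree) (Finset.mem_univ k)
          · exact Finset.le_sup (f := fun l => (R j l).degree) (Finset.mem_univ l)
  have termD : ∀ (i : Fin r) (j : Fin s),
      colDeg L i + (E i j).degree + rowDeg R j ≤ D := by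
    intro i j
    refine le_trans (Finset.le_sup (f := fun j => colDeg L i + (E i j).degree + rowDeg R j)
      (Finset.mem_univ j)) ?_
    exact Finset.le_sup (f := fun i => Finset.univ.sup
      fun j => colDeg L i + (E i j).degree + rowDeg R j) (Finset.mem_univ i)
  have hub : matDeg (L * E * R) ≤ D := by
    refine Finset.sup_le fun k _ => Finset.sup_le fun l _ => ?_
    rw [entry]
    refine (Polynomial.degree_sum_le _ _).trans (Finset.sup_le fun j _ => ?_)
    refine (Polynomial.degree_sum_le _ _).trans (Finset.sup_le fun i _ => ?_)
    exact (termdeg k l i j).trans (termD i j)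
  by_cases hD : D = ⊥
  · rw [hD]
    exact le_bot_iff.mp (hD ▸ hub)
  obtain ⟨d, hd⟩ := WithBot.ne_bot_iff_exists.mp hD
  have hd' : D = (d : WithBot ℕ) := by exact_mod_cast hd.symm
  -- the constant matrix of leading contributions
  set M : Matrix (Fin r) (Fin s) F := Matrix.of fun i j =>
    if colDeg L i + (E i j).degree + rowDeg R j = (d : WithBot ℕ) then (E i j).leadingCoeff
    else 0 with hM
  -- key coefficient identity
  have coeffid : ∀ (k : Fin m) (l : Fin n),
      ((L * E * R) k l).coeff d = (hcMatrix L * M * hrMatrix R) k l := by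
    intro k l
    rw [entry, Polynomial.finset_sum_coeff, Matrix.mul_apply]
    refine Finset.sum_congr rfl fun j _ => ?_
    rw [Polynomial.finset_sum_coeff, Matrix.mul_apply, Finset.sum_mul]
    refine Finset.sum_congr rfl fun i _ => ?_
    by_cases hij : colDeg L i + (E i j).degree + rowDeg R j = (d : WithBot ℕ)
    · have h1 : colDeg L i ≠ ⊥ := by intro h; rw [h] at hij; simp at hij
      have h2 : (E i j).degree ≠ ⊥ := by intro h; rw [h] at hij; simp at hij
      have h3 : rowDeg R j ≠ ⊥ := by intro h; rw [h] at hij; simp at hij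
      obtain ⟨a, ha0⟩ := WithBot.ne_bot_iff_exists.mp h1
      obtain ⟨b, hb0⟩ := WithBot.ne_bot_iff_exists.mp h2
      obtain ⟨c, hc0⟩ := WithBot.ne_bot_iff_exists.mp h3
      have ha : colDeg L i = (a : WithBot ℕ) := by exact_mod_cast ha0.symm
      have hb : (E i j).degree = (b : WithBot ℕ) := by exact_mod_cast hb0.symm
      have hc : rowDeg R j = (c : WithBot ℕ) := by exact_mod_cast hc0.symm
      have habc : a + b + c = d := by
        rw [ha, hb, hc] at hij
        exact_mod_cast hij
      have hca : colDegNat L i = a :=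
        sup_natDegree_eq' Finset.univ (fun k => L k i) a ha
      have hrc : rowDegNat R j = c :=
        sup_natDegree_eq' Finset.univ (fun l => R j l) c hc
      have e1 : (L k i).degree ≤ (a : WithBot ℕ) := by
        rw [← ha]
        exact Finset.le_sup (f := fun k => (L k i).degree) (Finset.mem_univ k)
      have e3 : (R j l).degree ≤ (c : WithBot ℕ) := by
        rw [← hc]
        exact Finset.le_sup (f := fun l => (R j l).degree) (Finset.mem_univ l)
      have e12 : (L k i * E i j).degree ≤ ((a + b : ℕ) : WithBot ℕ) := by
        refine (Polynomial.degree_mul_le _ _).trans ?_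
        rw [Nat.cast_add]
        exact add_le_add e1 hb.le
      have step : (L k i * E i j * R j l).coeff d =
          (L k i).coeff a * (E i j).coeff b * (R j l).coeff c := by
        rw [← habc, coeff_mul_le_deg' _ _ _ _ e12 e3,
          coeff_mul_le_deg' _ _ _ _ e1 hb.le]
      rw [step]
      have hbnat : (E i j).natDegree = b := Polynomial.natDegree_eq_of_degree_eq_some hb
      have : M i j = (E i j).leadingCoeff := by rw [hM]; simp [hij]
      rw [this, hcMatrix, hrMatrix, Polynomial.leadingCoeff, hbnat]
      simp [hca, hrc]
    · have hlt : colDeg L i + (E i j).degree + rowDeg R j < (d : WithBot ℕ) :=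
        lt_of_le_of_ne ((termD i j).trans hd'.le) hij
      rw [Polynomial.coeff_eq_zero_of_degree_lt (lt_of_le_of_lt (termdeg k l i j) hlt)]
      have : M i j = 0 := by rw [hM]; simp [hij]
      rw [this, mul_zero, zero_mul]
  -- M is nonzero
  have hex : ∃ i j, colDeg L i + (E i j).degree + rowDeg R j = (d : WithBot ℕ) := by
    have hd2 : (Finset.univ.sup fun i : Fin r =>
        Finset.univ.sup fun j : Fin s => colDeg L i + (E i j).degree + rowDeg R j)
        = (d : WithBot ℕ) := hDdef.symm.trans hd'
    have hne : (Finset.univ : Finset (Fin r)).Nonempty := by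
      rcases (Finset.univ : Finset (Fin r)).eq_empty_or_nonempty with he | hne
      · rw [he, Finset.sup_empty] at hd2
        exact absurd hd2 (by simp)
      · exact hne
    obtain ⟨i0, _, h0⟩ := Finset.exists_mem_eq_sup (Finset.univ : Finset (Fin r)) hne
      (fun i => Finset.univ.sup fun j => colDeg L i + (E i j).degree + rowDeg R j)
    rw [h0] at hd2
    have hne2 : (Finset.univ : Finset (Fin s)).Nonempty := by
      rcases (Finset.univ : Finset (Fin s)).eq_empty_or_nonempty with he | hne2
      · rw [he, Finset.sup_empty] at hd2
        exact absurd hd2 (by simp)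
      · exact hne2
    obtain ⟨j0, _, h1⟩ := Finset.exists_mem_eq_sup (Finset.univ : Finset (Fin s)) hne2
      (fun j => colDeg L i0 + (E i0 j).degree + rowDeg R j)
    rw [h1] at hd2
    exact ⟨i0, j0, hd2⟩
  obtain ⟨i0, j0, hij0⟩ := hex
  have hE0 : E i0 j0 ≠ 0 := by
    intro h
    rw [h] at hij0
    simp at hij0
  have hM0 : M i0 j0 ≠ 0 := by
    rw [hM]
    simpa [hij0] using Polynomial.leadingCoeff_ne_zero.mpr hE0
  -- propagate nonzeroness through full-rank factors
  have hA : Function.Injective (hcMatrix L).mulVec := mulVec_inj_of_rank' _ hL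
  have hB : Function.Injective (hrMatrix R)ᵀ.mulVec := by
    refine mulVec_inj_of_rank' _ ?_
    rw [Matrix.rank_transpose]
    exact hR
  have hv : (fun i => M i j0) ≠ (0 : Fin r → F) := by
    intro h
    exact hM0 (congrFun h i0)
  have hAv : (hcMatrix L).mulVec (fun i => M i j0) ≠ 0 := by
    intro h
    exact hv (hA (by rw [h, Matrix.mulVec_zero]))
  obtain ⟨k, hk⟩ := Function.ne_iff.mp hAv
  have hkM : (hcMatrix L * M) k j0 ≠ 0 := by
    rw [Matrix.mul_apply]
    exact hk
  have hw : (fun j => (hcMatrix L * M) k j) ≠ (0 : Fin s → F) := by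
    intro h
    exact hkM (congrFun h j0)
  have hBw : (hrMatrix R)ᵀ.mulVec (fun j => (hcMatrix L * M) k j) ≠ 0 := by
    intro h
    exact hw (hB (by rw [h, Matrix.mulVec_zero]))
  obtain ⟨l, hl⟩ := Function.ne_iff.mp hBw
  have hCkl : (hcMatrix L * M * hrMatrix R) k l ≠ 0 := by
    have : (hrMatrix R)ᵀ.mulVec (fun j => (hcMatrix L * M) k j) l =
        (hcMatrix L * M * hrMatrix R) k l := by
      rw [Matrix.mulVec, Matrix.mul_apply]
      simp [dotProduct, Matrix.transpose_apply, mul_comm]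
    rwa [this] at hl
  have hcoeff : ((L * E * R) k l).coeff d ≠ 0 := by
    rw [coeffid k l]
    exact hCkl
  have hlb : (d : WithBot ℕ) ≤ matDeg (L * E * R) := by
    refine le_trans (Polynomial.le_degree_of_ne_zero hcoeff) ?_
    refine le_trans (Finset.le_sup (f := fun l => ((L * E * R) k l).degree)
      (Finset.mem_univ l)) ?_
    exact Finset.le_sup (f := fun k => Finset.univ.sup fun l => ((L * E * R) k l).degree)
      (Finset.mem_univ k)
  exact le_antisymm hub (hd'.le.trans hlb)
end
end
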